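/- arXiv:2501.08318 — 3 statements merged into one kernel-verified Lean document; each statement's English description precedes it below -/
import Mathlib

section
/- Let L₁ and L₂ be finite lattices with Dim(L₁) = m and Dim(L₂) = n, and let L = L₁ ]ᵇₐ L₂ be their adjunct with respect to a pair a < b in L₁ with b not covering a. Then Dim(L) ≤ m + max{m, n}. -/
/-- A family of `t` relations is a *realizer* of the relation `le`:
each member is a linear order (on the whole ground set) and their
intersection is exactly `le`.  (In particular each member extends `le`.) -/
def IsRealizer {α : Type*} (le : α → α → Prop) {t : ℕ}
    (R : Fin t → α → α → Prop) : Prop :=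
  (∀ i, IsLinearOrder α (R i)) ∧ ∀ x y, le x y ↔ ∀ i, R i x y

/-- The Dushnik–Miller order dimension of the relation `le`: the least
positive number `t` of linear extensions whose intersection is `le`. -/
noncomputable def orderDim {α : Type*} (le : α → α → Prop) : ℕ :=
  sInf {t | 0 < t ∧ ∃ R : Fin t → α → α → Prop, IsRealizer le R}

/-- An element of a poset is doubly irreducible if it has at most one lower
cover and at most one upper cover. -/
def DoublyIrreducible {α : Type*} [PartialOrder α] (z : α) : Prop :=
  {w | w ⋖ z}.Subsingleton ∧ {w | z ⋖ w}.Subsingleton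

/-- An element is reducible if it is not doubly irreducible. -/
def Reducible {α : Type*} [PartialOrder α] (z : α) : Prop :=
  ¬ DoublyIrreducible z

/-- A lattice is an RC-lattice if any two of its reducible elements are
comparable. -/
def IsRCLattice (α : Type*) [Lattice α] : Prop :=
  ∀ x y : α, Reducible x → Reducible y → (x ≤ y ∨ y ≤ x)


/-- The ground set of the complete fundamental basic block `L_r`:
the chain `A₁ ≺ x₁ ≺ A₂ ≺ ⋯ ≺ x_{r-1} ≺ A_r` (of length `2r-1`,
`A_{i+1}` sitting at position `2i`, `x_{i+1}` at position `2i+1`),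
together with the doubly irreducible elements `c_{ij}` for `1 ≤ i < j ≤ r`. -/
def Lr (r : ℕ) : Type :=
  Fin (2 * r - 1) ⊕ {p : Fin r × Fin r // (p.1 : ℕ) < (p.2 : ℕ)}

namespace Lr

/-- The order of `L_r`: on the chain it is the usual order; `z ≤ c_{ij}` iff
`z ≤ A_i`; `c_{ij} ≤ z` iff `A_j ≤ z`; `c_{ij} ≤ c_{kl}` iff `(i,j) = (k,l)`
or `j ≤ k`. -/
def le {r : ℕ} (x y : Lr r) : Prop :=
  match x, y with
  | Sum.inl k, Sum.inl k' => (k : ℕ) ≤ (k' : ℕ)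
  | Sum.inl k, Sum.inr c => (k : ℕ) ≤ 2 * (c.1.1 : ℕ)
  | Sum.inr c, Sum.inl k => 2 * (c.1.2 : ℕ) ≤ (k : ℕ)
  | Sum.inr c, Sum.inr c' =>
      ((c.1.1 : ℕ) = (c'.1.1 : ℕ) ∧ (c.1.2 : ℕ) = (c'.1.2 : ℕ)) ∨
        (c.1.2 : ℕ) ≤ (c'.1.1 : ℕ)

instance (r : ℕ) : PartialOrder (Lr r) where
  le := le
  le_refl x := by rcases x with k | ⟨p, hp⟩ <;> simp [le]
  le_trans x y z hxy hyz := by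
    rcases x with k | ⟨p, hp⟩ <;> rcases y with k' | ⟨q, hq⟩ <;>
      rcases z with k'' | ⟨t, ht⟩ <;>
      simp only [le] at hxy hyz ⊢ <;> omega
  le_antisymm x y hxy hyx := by
    rcases x with k | ⟨p, hp⟩ <;> rcases y with k' | ⟨q, hq⟩ <;>
      simp only [le] at hxy hyx
    · exact congrArg Sum.inl (Fin.ext (by omega))
    · omega
    · omega
    · have h1 : (p.1 : ℕ) = (q.1 : ℕ) := by omega
      have h2 : (p.2 : ℕ) = (q.2 : ℕ) := by omega
      exact congrArg Sum.inr (Subtype.ext (Prod.ext (Fin.ext h1) (Fin.ext h2)))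

/-- The reducible element `A_{i+1}` of `L_r` (`i` is 0-based). -/
def A {r : ℕ} (i : Fin r) : Lr r :=
  Sum.inl ⟨2 * (i : ℕ), by have := i.2; omega⟩

/-- The doubly irreducible chain element `x_{i+1}` of `L_r` (`i` is 0-based). -/
def X {r : ℕ} (i : Fin (r - 1)) : Lr r :=
  Sum.inl ⟨2 * (i : ℕ) + 1, by have := i.2; omega⟩

/-- The doubly irreducible element `c_{(i+1)(j+1)}` of `L_r`
(`i`, `j` are 0-based). -/
def c {r : ℕ} (i j : Fin r) (h : (i : ℕ) < (j : ℕ)) : Lr r :=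
  Sum.inr ⟨(i, j), h⟩

end Lr


/-- The adjunct order `L₁ ]ᵇₐ L₂` on the disjoint union of two ordered sets
(with respect to the pair `a < b` of the first one):
`x ≤ y` iff both lie in `L₁` and `x ≤ y` there, or both lie in `L₂` and
`x ≤ y` there, or `x ∈ L₁`, `y ∈ L₂` and `x ≤ a`, or `x ∈ L₂`, `y ∈ L₁`
and `b ≤ y`. -/
def adjunctLE {α β : Type*} [LE α] [LE β] (a b : α) :
    α ⊕ β → α ⊕ β → Prop
  | Sum.inl x, Sum.inl y => x ≤ y
  | Sum.inl x, Sum.inr _ => x ≤ a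
  | Sum.inr _, Sum.inl y => b ≤ y
  | Sum.inr x, Sum.inr y => x ≤ y

/-- A subset of a lattice is a sublattice if it is closed under `⊔` and `⊓`. -/
def IsSublatticeSet {α : Type*} [Lattice α] (S : Set α) : Prop :=
  ∀ ⦃x⦄, x ∈ S → ∀ ⦃y⦄, y ∈ S → x ⊔ y ∈ S ∧ x ⊓ y ∈ S

/-- A finite lattice on `n` elements is dismantlable if there is a chain
`L₁ ⊆ L₂ ⊆ ⋯ ⊆ Lₙ` of sublattices with `|Lᵢ| = i` exhausting the lattice. -/
def Dismantlable (α : Type*) [Lattice α] : Prop :=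
  ∃ S : Fin (Nat.card α) → Set α,
    (∀ i, IsSublatticeSet (S i)) ∧
    (∀ i j, i ≤ j → S i ⊆ S j) ∧
    (∀ i, Nat.card (S i) = (i : ℕ) + 1) ∧
    (∀ x : α, ∃ i, x ∈ S i)

/-- The cover graph of a poset: `x` and `y` are adjacent iff one covers the
other. -/
def coverGraph (α : Type*) [PartialOrder α] : SimpleGraph α where
  Adj x y := x ⋖ y ∨ y ⋖ x
  symm := ⟨fun x y h => h.symm⟩
  loopless := ⟨fun x h => by rcases h with h | h <;> exact lt_irrefl x h.lt⟩

/-- The nullity of a poset: (number of covering pairs) − (number of elements)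
+ (number of connected components of the cover graph). -/
noncomputable def nullity (α : Type*) [PartialOrder α] : ℤ :=
  (Nat.card {p : α × α // p.1 ⋖ p.2} : ℤ) - (Nat.card α : ℤ) +
    (Nat.card (coverGraph α).ConnectedComponent : ℤ)

/-- `(a, b)` is an adjunct pair of the lattice `α`: `a < b` and `α` can be
partitioned into nonempty sublattices `K` and `M` with `a, b ∈ K`, `b` not
covering `a` within `K`, such that for `x ∈ K`, `y ∈ M`: `x ≤ y ↔ x ≤ a`
and `y ≤ x ↔ b ≤ x`. -/
def IsAdjunctPair {α : Type*} [Lattice α] (a b : α) : Prop :=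
  a < b ∧ ∃ K M : Set α, K.Nonempty ∧ M.Nonempty ∧ Disjoint K M ∧
    K ∪ M = Set.univ ∧ IsSublatticeSet K ∧ IsSublatticeSet M ∧
    a ∈ K ∧ b ∈ K ∧ (∃ z ∈ K, a < z ∧ z < b) ∧
    ∀ x ∈ K, ∀ y ∈ M, (x ≤ y ↔ x ≤ a) ∧ (y ≤ x ↔ b ≤ x)

/-- `s` is the least upper bound of `x` and `y` with respect to the
relation `le`. -/
def IsLUBRel {γ : Type*} (le : γ → γ → Prop) (x y s : γ) : Prop :=
  le x s ∧ le y s ∧ ∀ z, le x z → le y z → le s z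

/-- `s` is the greatest lower bound of `x` and `y` with respect to the
relation `le`. -/
def IsGLBRel {γ : Type*} (le : γ → γ → Prop) (x y s : γ) : Prop :=
  le s x ∧ le s y ∧ ∀ z, le z x → le z y → le z s

/-- `y` covers `x` with respect to the relation `le`. -/
def RelCovBy {γ : Type*} (le : γ → γ → Prop) (x y : γ) : Prop :=
  le x y ∧ x ≠ y ∧ ∀ z, le x z → le z y → z = x ∨ z = y

-- AUX START
lemma exists_realizer_of_finite (γ : Type*) [PartialOrder γ] [Finite γ] :
    ∃ t, 0 < t ∧ ∃ R : Fin t → γ → γ → Prop,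
      IsRealizer ((· ≤ ·) : γ → γ → Prop) R := by
  classical
  obtain ⟨s₀, hs₀lin, hs₀⟩ := extend_partialOrder ((· ≤ ·) : γ → γ → Prop)
  have key : ∀ p : {p : γ × γ // ¬ p.1 ≤ p.2}, ∃ s : γ → γ → Prop,
      IsLinearOrder γ s ∧ (∀ u v : γ, u ≤ v → s u v) ∧ s p.1.2 p.1.1 := by
    rintro ⟨⟨x, y⟩, hxy⟩
    let r : γ → γ → Prop := fun u v => u ≤ v ∨ (u ≤ y ∧ x ≤ v)
    haveI : IsPartialOrder γ r := by
      refine { refl := fun u => Or.inl le_rfl, trans := ?_, antisymm := ?_ }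
      · intro u v w huv hvw
        rcases huv with h1 | ⟨h1, h2⟩ <;> rcases hvw with h3 | ⟨h3, h4⟩
        · exact Or.inl (h1.trans h3)
        · exact Or.inr ⟨h1.trans h3, h4⟩
        · exact Or.inr ⟨h1, h2.trans h3⟩
        · exact absurd (h2.trans h3) hxy
      · intro u v huv hvu
        rcases huv with h1 | ⟨h1, h2⟩ <;> rcases hvu with h3 | ⟨h3, h4⟩
        · exact le_antisymm h1 h3
        · exact absurd (h4.trans (h1.trans h3)) hxy
        · exact absurd (h2.trans (h3.trans h1)) hxy
        · exact absurd (h2.trans h3) hxy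
    obtain ⟨s, hslin, hrs⟩ := extend_partialOrder r
    exact ⟨s, hslin, fun u v h => hrs u v (Or.inl h),
      hrs _ _ (Or.inr ⟨le_rfl, le_rfl⟩)⟩
  choose s hs1 hs2 hs3 using key
  haveI : Fintype {p : γ × γ // ¬ p.1 ≤ p.2} := Fintype.ofFinite _
  set N := Fintype.card {p : γ × γ // ¬ p.1 ≤ p.2} with hN
  let e := (Fintype.equivFin {p : γ × γ // ¬ p.1 ≤ p.2})
  refine ⟨N + 1, Nat.succ_pos _,
    Fin.cases s₀ (fun j => s (e.symm j)), ?_, ?_⟩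
  · intro i
    induction i using Fin.cases with
    | zero => simpa using hs₀lin
    | succ j => simpa using hs1 (e.symm j)
  · intro x y
    constructor
    · intro h i
      induction i using Fin.cases with
      | zero => simpa using hs₀ x y h
      | succ j => simpa using hs2 (e.symm j) x y h
    · intro h
      by_contra hxy
      set p : {p : γ × γ // ¬ p.1 ≤ p.2} := ⟨(x, y), hxy⟩ with hp
      have h1 : s p x y := by simpa using h (e p).succ
      have h2 : s p y x := hs3 p
      haveI := hs1 p
      exact hxy (le_of_eq (antisymm_of (s p) h1 h2))

/-- Insert the second ground set as a block into a linear order on the first,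
at the cut determined by the down-closed set `C`. -/
def insBlock {α β : Type*} (P : α → α → Prop) (Q : β → β → Prop) (C : α → Prop) :
    α ⊕ β → α ⊕ β → Prop
  | Sum.inl x, Sum.inl y => P x y
  | Sum.inl x, Sum.inr _ => C x
  | Sum.inr _, Sum.inl y => ¬ C y
  | Sum.inr x, Sum.inr y => Q x y

lemma insBlock_isLinearOrder {α β : Type*} {P : α → α → Prop} {Q : β → β → Prop}
    {C : α → Prop} (hP : IsLinearOrder α P) (hQ : IsLinearOrder β Q)
    (hC : ∀ x y, C y → P x y → C x) :
    IsLinearOrder (α ⊕ β) (insBlock P Q C) := by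
  classical
  haveI := hP; haveI := hQ
  refine { refl := ?_, trans := ?_, antisymm := ?_, total := ?_ }
  · rintro (x | x)
    · exact refl_of P x
    · exact refl_of Q x
  · rintro (x | x) (y | y) (z | z) h1 h2 <;>
      simp only [insBlock] at h1 h2 ⊢
    · exact trans_of P h1 h2
    · exact hC x y h2 h1
    · rcases total_of P x z with h | h
      · exact h
      · exact absurd (hC z x h1 h) h2
    · exact h1
    · intro hCz; exact h1 (hC y z hCz h2)
    · exact absurd h2 h1
    · exact h2
    · exact trans_of Q h1 h2
  · rintro (x | x) (y | y) h1 h2 <;> simp only [insBlock] at h1 h2 ⊢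
    · exact congrArg Sum.inl (antisymm_of P h1 h2)
    · exact absurd h1 h2
    · exact absurd h2 h1
    · exact congrArg Sum.inr (antisymm_of Q h1 h2)
  · rintro (x | x) (y | y) <;> simp only [insBlock]
    · exact total_of P x y
    · exact em (C x)
    · exact (em (C y)).symm
    · exact total_of Q x y

/-- `Dim(L₁ ]ᵇₐ L₂) ≤ m + max {m, n}` where `m = Dim L₁`,
`n = Dim L₂`. -/
theorem dim_adjunct_le_add_max {α β : Type*} [Lattice α] [Lattice β]
    [Finite α] [Finite β] {a b : α} (hab : a < b) (hcov : ¬ a ⋖ b)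
    {m n : ℕ} (hm : orderDim ((· ≤ ·) : α → α → Prop) = m)
    (hn : orderDim ((· ≤ ·) : β → β → Prop) = n) :
    orderDim (adjunctLE (α := α) (β := β) a b) ≤ m + max m n := by
  classical
  have hmem₁ : 0 < m ∧ ∃ R : Fin m → α → α → Prop,
      IsRealizer ((· ≤ ·) : α → α → Prop) R := by
    rw [← hm]
    obtain ⟨t, ht, hR⟩ := exists_realizer_of_finite α
    have hne : {t | 0 < t ∧ ∃ R : Fin t → α → α → Prop,
        IsRealizer ((· ≤ ·) : α → α → Prop) R}.Nonempty := ⟨t, ht, hR⟩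
    exact Nat.sInf_mem hne
  have hmem₂ : 0 < n ∧ ∃ S : Fin n → β → β → Prop,
      IsRealizer ((· ≤ ·) : β → β → Prop) S := by
    rw [← hn]
    obtain ⟨t, ht, hS⟩ := exists_realizer_of_finite β
    have hne : {t | 0 < t ∧ ∃ S : Fin t → β → β → Prop,
        IsRealizer ((· ≤ ·) : β → β → Prop) S}.Nonempty := ⟨t, ht, hS⟩
    exact Nat.sInf_mem hne
  obtain ⟨hm0, R, hR⟩ := hmem₁
  obtain ⟨hn0, S, hS⟩ := hmem₂
  set k := max m n with hk
  -- padded families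
  set Rn : ℕ → α → α → Prop :=
    fun i => R (if h : i < m then ⟨i, h⟩ else ⟨0, hm0⟩) with hRn
  set Sn : ℕ → β → β → Prop :=
    fun i => S (if h : i < n then ⟨i, h⟩ else ⟨0, hn0⟩) with hSn
  have hRlin : ∀ i, IsLinearOrder α (Rn i) := fun i => hR.1 _
  have hSlin : ∀ i, IsLinearOrder β (Sn i) := fun i => hS.1 _
  have hRle : ∀ i (x y : α), x ≤ y → Rn i x y :=
    fun i x y h => (hR.2 x y).1 h _
  have hSle : ∀ i (x y : β), x ≤ y → Sn i x y :=
    fun i x y h => (hS.2 x y).1 h _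
  have hRn_eq : ∀ j : Fin m, Rn (j : ℕ) = R j := by
    intro j; simp [hRn, j.2]
  have hSn_eq : ∀ j : Fin n, Sn (j : ℕ) = S j := by
    intro j; simp [hSn, j.2]
  -- useful: no Rn i can invert a and b
  have hRnab : ∀ i (x : α), Rn i b x → Rn i x a → False := by
    intro i x h1 h2
    haveI := hRlin i
    have hba : Rn i b a := trans_of (Rn i) h1 h2
    have hba' : b = a := antisymm_of (Rn i) hba (hRle i a b hab.le)
    exact hab.ne hba'.symm
  -- the two templates
  set T : Fin (m + k) → (α ⊕ β → α ⊕ β → Prop) := fun i =>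
    if (i : ℕ) < m then
      insBlock (Rn i) (Sn i) (fun x => Rn i x a)
    else
      insBlock (Rn ((i : ℕ) - m)) (Sn ((i : ℕ) - m))
        (fun x => ¬ Rn ((i : ℕ) - m) b x) with hT
  have hTlin : ∀ i, IsLinearOrder (α ⊕ β) (T i) := by
    intro i
    rw [hT]
    dsimp only
    split
    · refine insBlock_isLinearOrder (hRlin _) (hSlin _) ?_
      intro x y hy hxy
      haveI := hRlin (i : ℕ)
      exact trans_of (Rn i) hxy hy
    · refine insBlock_isLinearOrder (hRlin _) (hSlin _) ?_
      intro x y hy hxy hbx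
      haveI := hRlin ((i : ℕ) - m)
      exact hy (trans_of (Rn _) hbx hxy)
  have hText : ∀ (x y : α ⊕ β), adjunctLE a b x y → ∀ i, T i x y := by
    rintro (x | x) (y | y) hxy i <;> rw [hT] <;> dsimp only <;> split <;>
      simp only [insBlock]
    · exact hRle _ _ _ hxy
    · exact hRle _ _ _ hxy
    · exact hRle _ _ _ hxy
    · intro hbx
      exact hRnab _ x hbx (hRle _ _ _ hxy)
    · intro hya
      exact hRnab _ y (hRle _ _ _ hxy) hya
    · intro h; exact h (hRle _ _ _ hxy)
    · exact hSle _ _ _ hxy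
    · exact hSle _ _ _ hxy
  refine le_trans (Nat.sInf_le ?_) le_rfl
  refine ⟨by omega, T, hTlin, ?_⟩
  intro x y
  constructor
  · exact fun h i => hText x y h i
  · intro h
    rcases x with x | x <;> rcases y with y | y
    · show x ≤ y
      refine (hR.2 x y).2 (fun j => ?_)
      have hj : (j : ℕ) < m + k := by have := j.2; omega
      have := h ⟨(j : ℕ), hj⟩
      rw [hT] at this
      simp only [j.2, if_pos] at this
      rw [← hRn_eq j]
      exact this
    · show x ≤ a
      refine (hR.2 x a).2 (fun j => ?_)
      have hj : (j : ℕ) < m + k := by have := j.2; omega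
      have := h ⟨(j : ℕ), hj⟩
      rw [hT] at this
      simp only [j.2, if_pos] at this
      rw [← hRn_eq j]
      exact this
    · show b ≤ y
      refine (hR.2 b y).2 (fun j => ?_)
      have hjk : (j : ℕ) < k := lt_of_lt_of_le j.2 (le_max_left m n)
      have hj : m + (j : ℕ) < m + k := by omega
      have := h ⟨m + (j : ℕ), hj⟩
      rw [hT] at this
      have hnm : ¬ (m + (j : ℕ) < m) := by omega
      simp only [hnm, if_neg, not_false_iff, Nat.add_sub_cancel_left] at this
      rw [← hRn_eq j]
      exact not_not.mp this
    · show x ≤ y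
      refine (hS.2 x y).2 (fun j => ?_)
      have hjk : (j : ℕ) < k := lt_of_lt_of_le j.2 (le_max_right m n)
      have hj : m + (j : ℕ) < m + k := by omega
      have := h ⟨m + (j : ℕ), hj⟩
      rw [hT] at this
      have hnm : ¬ (m + (j : ℕ) < m) := by omega
      simp only [hnm, if_neg, not_false_iff, Nat.add_sub_cancel_left] at this
      rw [← hSn_eq j]
      exact this
end

section
/- Let L₁ and L₂ be finite lattices with Dim(L₁) = m and Dim(L₂) = n, let L = L₁ ]ᵇₐ L₂ be their adjunct with respect to a pair a < b in L₁ with b not covering a, and suppose m ≥ n. Then m ≤ Dim(L) ≤ m + 1. -/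
section Aux
variable {α : Type*} [PartialOrder α]

lemma aux_pair_ext (x y : α) (h1 : ¬ x ≤ y) (h2 : ¬ y ≤ x) :
    ∃ s : α → α → Prop, IsLinearOrder α s ∧ (∀ u v, u ≤ v → s u v) ∧ s y x := by
  set r : α → α → Prop := fun u v => u ≤ v ∨ (u ≤ y ∧ x ≤ v) with hrdef
  haveI : IsPartialOrder α r :=
    { refl := fun u => Or.inl le_rfl
      trans := by
        rintro u v w (huv | ⟨huy, hxv⟩) (hvw | ⟨hvy, hxw⟩)
        · exact Or.inl (huv.trans hvw)
        · exact Or.inr ⟨huv.trans hvy, hxw⟩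
        · exact Or.inr ⟨huy, hxv.trans hvw⟩
        · exact absurd (hxv.trans hvy) h1
      antisymm := by
        rintro u v (huv | ⟨huy, hxv⟩) (hvu | ⟨hvy, hxu⟩)
        · exact le_antisymm huv hvu
        · exact absurd ((hxu.trans huv).trans hvy) h1
        · exact absurd ((hxv.trans hvu).trans huy) h1
        · exact absurd (hxv.trans hvy) h1 }
  obtain ⟨s, hs, hrs⟩ := extend_partialOrder r
  exact ⟨s, hs, fun u v h => hrs u v (Or.inl h), hrs y x (Or.inr ⟨le_rfl, le_rfl⟩)⟩

lemma exists_realizer (α : Type*) [PartialOrder α] [Finite α] :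
    ∃ t, 0 < t ∧ ∃ R : Fin t → α → α → Prop, IsRealizer (· ≤ ·) R := by
  obtain ⟨k, ⟨e⟩⟩ := Finite.exists_equiv_fin (α × α)
  obtain ⟨s0, hs0, hext0⟩ := extend_partialOrder ((· ≤ ·) : α → α → Prop)
  have hall : ∀ p : α × α, ∃ s : α → α → Prop, IsLinearOrder α s ∧
      (∀ u v, u ≤ v → s u v) ∧ (¬ p.1 ≤ p.2 → ¬ p.2 ≤ p.1 → s p.2 p.1) := by
    intro p
    by_cases h1 : p.1 ≤ p.2
    · exact ⟨s0, hs0, fun u v h => hext0 u v h, fun h => absurd h1 h⟩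
    · by_cases h2 : p.2 ≤ p.1
      · exact ⟨s0, hs0, fun u v h => hext0 u v h, fun _ h => absurd h2 h⟩
      · obtain ⟨s, hs, hext, hrev⟩ := aux_pair_ext p.1 p.2 h1 h2
        exact ⟨s, hs, hext, fun _ _ => hrev⟩
  choose s hs hext hrev using hall
  refine ⟨k + 1, Nat.succ_pos _,
    fun i => if h : (i : ℕ) < k then s (e.symm ⟨i, h⟩) else s0, ?_, ?_⟩
  · intro i
    show IsLinearOrder α (if h : (i : ℕ) < k then s (e.symm ⟨(i : ℕ), h⟩) else s0)
    split
    · exact hs _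
    · exact hs0
  · intro x y
    constructor
    · intro hxy i
      show (if h : (i : ℕ) < k then s (e.symm ⟨(i : ℕ), h⟩) else s0) x y
      split
      · exact hext _ x y hxy
      · exact hext0 x y hxy
    · intro h
      by_contra hxy
      by_cases h2 : y ≤ x
      · have hlast : (if h : (k : ℕ) < k then s (e.symm ⟨k, h⟩) else s0) x y :=
          h ⟨k, Nat.lt_succ_self k⟩
        rw [dif_neg (lt_irrefl k)] at hlast
        exact hxy (le_of_eq (hs0.antisymm x y hlast (hext0 y x h2)))
      · have hi : ((e (x, y) : Fin k) : ℕ) < k := (e (x, y)).2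
        have hmem : (if h : ((e (x, y) : Fin k) : ℕ) < k then
            s (e.symm ⟨((e (x, y) : Fin k) : ℕ), h⟩) else s0) x y :=
          h ⟨(e (x, y) : Fin k), by omega⟩
        rw [dif_pos hi] at hmem
        have heq : (⟨((e (x, y) : Fin k) : ℕ), hi⟩ : Fin k) = e (x, y) := Fin.eta _ _
        rw [heq, Equiv.symm_apply_apply] at hmem
        have hyx := hrev (x, y) hxy h2
        exact hxy (le_of_eq ((hs (x, y)).antisymm x y hmem hyx))
end Aux

section Comb
variable {α β : Type*}

def comb (r : α → α → Prop) (s : β → β → Prop) (P : α → Prop) :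
    α ⊕ β → α ⊕ β → Prop
  | Sum.inl x, Sum.inl y => r x y
  | Sum.inl x, Sum.inr _ => P x
  | Sum.inr _, Sum.inl y => ¬ P y
  | Sum.inr x, Sum.inr y => s x y

lemma comb_linear {r : α → α → Prop} {s : β → β → Prop} {P : α → Prop}
    (hr : IsLinearOrder α r) (hs : IsLinearOrder β s)
    (hP : ∀ x y, r x y → P y → P x) : IsLinearOrder (α ⊕ β) (comb r s P) :=
  { refl := by
      rintro (x | x)
      · exact hr.refl x
      · exact hs.refl x
    trans := by
      rintro (x | x) (y | y) (z | z) h1 h2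
      · exact hr.trans x y z h1 h2
      · exact hP x y h1 h2
      · exact (hr.total x z).resolve_right (fun hzx => h2 (hP z x hzx h1))
      · exact h1
      · exact fun hz => h1 (hP y z h2 hz)
      · exact absurd h2 h1
      · exact h2
      · exact hs.trans x y z h1 h2
    antisymm := by
      rintro (x | x) (y | y) h1 h2
      · exact congrArg Sum.inl (hr.antisymm x y h1 h2)
      · exact absurd h1 h2
      · exact absurd h2 h1
      · exact congrArg Sum.inr (hs.antisymm x y h1 h2)
    total := by
      rintro (x | x) (y | y)
      · exact (hr.total x y).imp id id
      · exact (em (P x)).imp id id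
      · exact (em (P y)).symm.imp id id
      · exact (hs.total x y).imp id id }

lemma comb_ext [Preorder α] [Preorder β] {a b : α}
    {r : α → α → Prop} {s : β → β → Prop} {P : α → Prop}
    (hr : ∀ x y : α, x ≤ y → r x y) (hs : ∀ x y : β, x ≤ y → s x y)
    (hPa : ∀ x, x ≤ a → P x) (hPb : ∀ x, b ≤ x → ¬ P x) :
    ∀ u v, adjunctLE (α := α) (β := β) a b u v → comb r s P u v := by
  rintro (x | x) (y | y) h
  · exact hr x y h
  · exact hPa x h
  · exact hPb y h
  · exact hs x y h

end Comb

/-- if `m = Dim L₁ ≥ n = Dim L₂` then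
`m ≤ Dim(L₁ ]ᵇₐ L₂) ≤ m + 1`. -/
theorem dim_adjunct_of_ge {α β : Type*} [Lattice α] [Lattice β]
    [Finite α] [Finite β] {a b : α} (hab : a < b) (hcov : ¬ a ⋖ b)
    {m n : ℕ} (hm : orderDim ((· ≤ ·) : α → α → Prop) = m)
    (hn : orderDim ((· ≤ ·) : β → β → Prop) = n) (hmn : n ≤ m) :
    m ≤ orderDim (adjunctLE (α := α) (β := β) a b) ∧
      orderDim (adjunctLE (α := α) (β := β) a b) ≤ m + 1 := by
  classical
  -- extract realizers of α and β of sizes m and n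
  have hαmem : m ∈ {t | 0 < t ∧ ∃ R : Fin t → α → α → Prop, IsRealizer (· ≤ ·) R} := by
    rw [← hm]; exact Nat.sInf_mem (exists_realizer α)
  have hβmem : n ∈ {t | 0 < t ∧ ∃ S : Fin t → β → β → Prop, IsRealizer (· ≤ ·) S} := by
    rw [← hn]; exact Nat.sInf_mem (exists_realizer β)
  obtain ⟨hmpos, R, hRlin, hRiff⟩ := hαmem
  obtain ⟨hnpos, S, hSlin, hSiff⟩ := hβmem
  -- the auxiliary linear extension Q of α putting everything not above b below b
  set χ : α → ℕ := fun x => if b ≤ x then 1 else 0 with hχdef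
  have hχmono : ∀ x y : α, x ≤ y → χ x ≤ χ y := by
    intro x y hxy
    simp only [hχdef]
    by_cases hbx : b ≤ x
    · rw [if_pos hbx, if_pos (hbx.trans hxy)]
    · rw [if_neg hbx]; omega
  set R0 : α → α → Prop := R ⟨0, hmpos⟩ with hR0def
  set Q : α → α → Prop := fun x y => χ x < χ y ∨ (χ x = χ y ∧ R0 x y) with hQdef
  have hQlin : IsLinearOrder α Q :=
    { refl := fun x => Or.inr ⟨rfl, (hRlin _).refl x⟩
      trans := by
        rintro x y z (h1 | ⟨h1, h1'⟩) (h2 | ⟨h2, h2'⟩)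
        · exact Or.inl (h1.trans h2)
        · exact Or.inl (h2 ▸ h1)
        · exact Or.inl (h1 ▸ h2)
        · exact Or.inr ⟨h1.trans h2, (hRlin _).trans x y z h1' h2'⟩
      antisymm := by
        rintro x y (h1 | ⟨h1, h1'⟩) (h2 | ⟨h2, h2'⟩) <;>
          first
          | omega
          | exact (hRlin _).antisymm x y h1' h2'
      total := by
        intro x y
        rcases lt_trichotomy (χ x) (χ y) with h | h | h
        · exact Or.inl (Or.inl h)
        · exact ((hRlin _).total x y).imp (fun h' => Or.inr ⟨h, h'⟩)
            (fun h' => Or.inr ⟨h.symm, h'⟩)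
        · exact Or.inr (Or.inl h) }
  have hQext : ∀ x y : α, x ≤ y → Q x y := by
    intro x y hxy
    rcases lt_or_eq_of_le (hχmono x y hxy) with h | h
    · exact Or.inl h
    · exact Or.inr ⟨h, (hRiff x y).mp hxy _⟩
  have hQb : ∀ x, Q b x → b ≤ x := by
    intro x hx
    have hχb : χ b = 1 := if_pos le_rfl
    by_contra hbx
    have hχx : χ x = 0 := if_neg hbx
    rcases hx with h | ⟨h, -⟩ <;> omega
  -- the extension of ≤ on α used for index i < m
  have hRext : ∀ (j : Fin m) (x y : α), x ≤ y → R j x y := fun j x y h => (hRiff x y).mp h j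
  have hRb : ∀ (j : Fin m) (x : α), b ≤ x → ¬ R j x a := by
    intro j x hbx hxa
    have h1 : R j b a := (hRlin j).trans b x a (hRext j b x hbx) hxa
    have h2 : R j a b := hRext j a b hab.le
    exact hab.ne ((hRlin j).antisymm a b h2 h1)
  -- the realizer of the adjunct of size m + 1
  set T : Fin (m + 1) → (α ⊕ β) → (α ⊕ β) → Prop := fun i =>
    if h : (i : ℕ) < m then
      comb (R ⟨i, h⟩) (S ⟨min (i : ℕ) (n - 1), by omega⟩) (fun x => R ⟨i, h⟩ x a)
    else comb Q (S ⟨0, hnpos⟩) (fun x => ¬ Q b x) with hTdef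
  have hTeq : ∀ (i : ℕ) (h : i < m) (hh : i < m + 1), T ⟨i, hh⟩ =
      comb (R ⟨i, h⟩) (S ⟨min i (n - 1), by omega⟩) (fun x => R ⟨i, h⟩ x a) := by
    intro i h hh
    simp only [hTdef]
    rw [dif_pos h]
  have hTlast : T ⟨m, Nat.lt_succ_self m⟩ = comb Q (S ⟨0, hnpos⟩) (fun x => ¬ Q b x) := by
    simp only [hTdef]
    rw [dif_neg (lt_irrefl m)]
  have hTreal : IsRealizer (adjunctLE (α := α) (β := β) a b) T := by
    constructor
    · intro i
      rcases Nat.lt_or_ge (i : ℕ) m with h | h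
      · rw [show i = (⟨(i : ℕ), i.2⟩ : Fin (m + 1)) from rfl, hTeq _ h]
        exact comb_linear (hRlin _) (hSlin _)
          (fun x y hxy hya => (hRlin _).trans x y a hxy hya)
      · have : i = ⟨m, Nat.lt_succ_self m⟩ := Fin.ext (show (i : ℕ) = m by omega)
        rw [this, hTlast]
        refine comb_linear hQlin (hSlin _) ?_
        intro x y hxy hy hbx
        exact hy (hQlin.trans b x y hbx hxy)
    · intro u v
      constructor
      · intro huv i
        rcases Nat.lt_or_ge (i : ℕ) m with h | h
        · rw [show i = (⟨(i : ℕ), i.2⟩ : Fin (m + 1)) from rfl, hTeq _ h]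
          refine comb_ext (hRext _) (fun x y hxy => (hSiff x y).mp hxy _) ?_ (hRb _) u v huv
          exact fun x hxa => hRext _ x a hxa
        · have : i = ⟨m, Nat.lt_succ_self m⟩ := Fin.ext (show (i : ℕ) = m by omega)
          rw [this, hTlast]
          refine comb_ext hQext (fun x y hxy => (hSiff x y).mp hxy _) ?_ ?_ u v huv
          · intro x hxa hQbx
            exact absurd ((hQb x hQbx).trans hxa) (not_le_of_gt hab)
          · exact fun x hbx => not_not_intro (hQext b x hbx)
      · intro h
        rcases u with x | x <;> rcases v with y | y
        · show x ≤ y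
          refine (hRiff x y).mpr fun j => ?_
          have hj := h ⟨(j : ℕ), by omega⟩
          rw [hTeq _ j.2] at hj
          exact hj
        · show x ≤ a
          refine (hRiff x a).mpr fun j => ?_
          have hj := h ⟨(j : ℕ), by omega⟩
          rw [hTeq _ j.2] at hj
          exact hj
        · show b ≤ y
          have hj := h ⟨m, Nat.lt_succ_self m⟩
          rw [hTlast] at hj
          exact hQb y (not_not.mp hj)
        · show x ≤ y
          refine (hSiff x y).mpr fun j => ?_
          have hjm : (j : ℕ) < m := lt_of_lt_of_le j.2 hmn
          have hj := h ⟨(j : ℕ), by omega⟩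
          rw [hTeq _ hjm] at hj
          have : (⟨min (j : ℕ) (n - 1), by omega⟩ : Fin n) = j := Fin.ext (show min (j : ℕ) (n - 1) = (j : ℕ) by omega)
          rwa [this] at hj
  have hLmem : (m + 1) ∈ {t | 0 < t ∧
      ∃ R : Fin t → (α ⊕ β) → (α ⊕ β) → Prop,
        IsRealizer (adjunctLE (α := α) (β := β) a b) R} :=
    ⟨Nat.succ_pos m, T, hTreal⟩
  constructor
  · -- lower bound
    have key : ∀ t ∈ {t | 0 < t ∧ ∃ R : Fin t → (α ⊕ β) → (α ⊕ β) → Prop,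
        IsRealizer (adjunctLE (α := α) (β := β) a b) R}, m ≤ t := by
      rintro t ⟨htpos, U, hUlin, hUiff⟩
      rw [← hm]
      refine Nat.sInf_le ⟨htpos, fun i x y => U i (Sum.inl x) (Sum.inl y), ?_, ?_⟩
      · intro i
        exact
          { refl := fun x => (hUlin i).refl _
            trans := fun x y z => (hUlin i).trans _ _ _
            antisymm := fun x y h1 h2 => Sum.inl.inj ((hUlin i).antisymm _ _ h1 h2)
            total := fun x y => (hUlin i).total _ _ }
      · intro x y
        exact hUiff (Sum.inl x) (Sum.inl y)
    unfold orderDim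
    exact key _ (Nat.sInf_mem ⟨m + 1, hLmem⟩)
  · exact Nat.sInf_le hLmem
end

section
/- If L is a finite dismantlable lattice whose nullity equals k, then the order dimension of L is at most k + 1. -/
open Classical in
theorem isLinearOrder_of {α : Type*} {r : α → α → Prop} (hrefl : ∀ x, r x x)
    (htrans : ∀ x y z, r x y → r y z → r x z)
    (hanti : ∀ x y, r x y → r y x → x = y)
    (htot : ∀ x y, r x y ∨ r y x) : IsLinearOrder α r := by
  haveI : IsRefl α r := ⟨hrefl⟩
  haveI : IsTrans α r := ⟨fun a b c => htrans a b c⟩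
  haveI : IsPreorder α r := {}
  haveI : IsAntisymm α r := ⟨hanti⟩
  haveI : IsPartialOrder α r := {}
  haveI : IsTotal α r := ⟨htot⟩
  exact {}

theorem isRealizer_extends {α : Type*} {le : α → α → Prop} {t : ℕ}
    {R : Fin t → α → α → Prop} (hR : IsRealizer le R) {x y : α} (h : le x y) (i : Fin t) :
    R i x y := (hR.2 x y).1 h i

theorem isRealizer_pad {α : Type*} {le : α → α → Prop} {t t' : ℕ} (ht : 0 < t) (h : t ≤ t')
    {R : Fin t → α → α → Prop} (hR : IsRealizer le R) :
    ∃ R' : Fin t' → α → α → Prop, IsRealizer le R' := by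
  refine ⟨fun j => R (if hj : (j : ℕ) < t then ⟨j, hj⟩ else ⟨0, ht⟩),
    fun j => hR.1 _, fun x y => ?_⟩
  rw [hR.2]
  constructor
  · intro hall j; exact hall _
  · intro hall i
    have h2 := hall ⟨(i : ℕ), lt_of_lt_of_le i.2 h⟩
    simpa [i.2] using h2

/-- A total partial order gives a one-element realizer. -/
theorem isRealizer_single {α : Type*} [PartialOrder α]
    (htot : ∀ x y : α, x ≤ y ∨ y ≤ x) :
    IsRealizer ((· ≤ ·) : α → α → Prop) (fun _ : Fin 1 => (· ≤ ·)) := by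
  refine ⟨fun _ => isLinearOrder_of (fun x => le_refl x)
      (fun x y z => le_trans) (fun x y => le_antisymm) htot, fun x y => ?_⟩
  constructor
  · intro h _; exact h
  · intro h; exact h 0

section Sub
variable {α : Type*} [Lattice α] {S : Set α}

/-- The lattice structure on a sublattice set. -/
def IsSublatticeSet.lattice (hS : IsSublatticeSet S) : Lattice ↥S where
  sup x y := ⟨↑x ⊔ ↑y, (hS x.2 y.2).1⟩
  inf x y := ⟨↑x ⊓ ↑y, (hS x.2 y.2).2⟩
  le_sup_left x y := Subtype.coe_le_coe.1 le_sup_left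
  le_sup_right x y := Subtype.coe_le_coe.1 le_sup_right
  sup_le x y z hx hy := Subtype.coe_le_coe.1 (sup_le hx hy)
  inf_le_left x y := Subtype.coe_le_coe.1 inf_le_left
  inf_le_right x y := Subtype.coe_le_coe.1 inf_le_right
  le_inf x y z hx hy := Subtype.coe_le_coe.1 (le_inf hx hy)

theorem IsSublatticeSet.coe_sup (hS : IsSublatticeSet S) (x y : ↥S) :
    ((hS.lattice.sup x y : ↥S) : α) = (x : α) ⊔ y := rfl

theorem IsSublatticeSet.coe_inf (hS : IsSublatticeSet S) (x y : ↥S) :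
    ((hS.lattice.inf x y : ↥S) : α) = (x : α) ⊓ y := rfl

end Sub


section Basics
variable {β : Type*} [Lattice β] [Finite β]

theorem exists_bot' [Nonempty β] : ∃ b : β, ∀ x, b ≤ x := by
  haveI := Fintype.ofFinite β
  exact ⟨Finset.univ.inf' Finset.univ_nonempty id, fun x => Finset.inf'_le id (Finset.mem_univ x)⟩

theorem exists_top' [Nonempty β] : ∃ b : β, ∀ x, x ≤ b := by
  haveI := Fintype.ofFinite β
  exact ⟨Finset.univ.sup' Finset.univ_nonempty id, fun x => Finset.le_sup' id (Finset.mem_univ x)⟩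

theorem exists_covby_below {z w : β} (hw : w < z) : ∃ m, m ⋖ z := by
  haveI := Fintype.ofFinite β
  classical
  obtain ⟨m, hm, hmax⟩ := (Finset.univ.filter (fun x => x < z)).exists_maximal
    ⟨w, by simp [hw]⟩
  simp only [Finset.mem_filter, Finset.mem_univ, true_and] at hm hmax
  exact ⟨m, hm, fun c hc1 hc2 => not_le_of_gt hc1 (hmax (by simpa using hc2) hc1.le)⟩

theorem exists_covby_above {z w : β} (hw : z < w) : ∃ m, z ⋖ m := by
  haveI := Fintype.ofFinite β
  classical
  obtain ⟨m, hm, hmin⟩ := (Finset.univ.filter (fun x => z < x)).exists_minimal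
    ⟨w, by simp [hw]⟩
  simp only [Finset.mem_filter, Finset.mem_univ, true_and] at hm hmin
  exact ⟨m, hm, fun c hc1 hc2 => not_le_of_gt hc2 (hmin (by simpa using hc1) hc2.le)⟩

theorem card_cc_eq_one_of_bot {γ : Type*} [PartialOrder γ] [Finite γ] (bo : γ)
    (hbo : ∀ x, bo ≤ x) : Nat.card (coverGraph γ).ConnectedComponent = 1 := by
  classical
  haveI : Nonempty γ := ⟨bo⟩
  haveI := Fintype.ofFinite γ
  have hreach : ∀ x : γ, (coverGraph γ).Reachable x bo := by
    intro x
    induction x using WellFoundedLT.induction with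
    | _ x ih =>
      rcases eq_or_lt_of_le (hbo x) with h | h
      · exact h ▸ SimpleGraph.Reachable.refl bo
      · obtain ⟨m, hm, hmax⟩ := (Finset.univ.filter (fun y => y < x)).exists_maximal
          ⟨bo, by simp [h]⟩
        simp only [Finset.mem_filter, Finset.mem_univ, true_and] at hm hmax
        have hcov : m ⋖ x := ⟨hm, fun c hc1 hc2 => not_le_of_gt hc1 (hmax (by simpa using hc2) hc1.le)⟩
        have hadj : (coverGraph γ).Adj x m := Or.inr hcov
        exact (hadj.reachable).trans (ih m hm)
  rw [Nat.card_eq_one_iff_unique]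
  constructor
  · constructor
    intro c d
    refine SimpleGraph.ConnectedComponent.ind (fun v => ?_) c
    refine SimpleGraph.ConnectedComponent.ind (fun w => ?_) d
    exact SimpleGraph.ConnectedComponent.sound ((hreach v).trans (hreach w).symm)
  · exact ⟨(coverGraph γ).connectedComponentMk bo⟩

theorem card_le_card_covers_add_one_of_top {γ : Type*} [PartialOrder γ] [Finite γ] (t₀ : γ)
    (ht₀ : ∀ x, x ≤ t₀) : Nat.card γ ≤ Nat.card {p : γ × γ // p.1 ⋖ p.2} + 1 := by
  classical
  haveI : Nonempty γ := ⟨t₀⟩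
  haveI := Fintype.ofFinite γ
  have hcov : ∀ x : {x : γ // ¬ x = t₀}, ∃ m, (x : γ) ⋖ m := by
    intro x
    have hlt : (x : γ) < t₀ := lt_of_le_of_ne (ht₀ x) x.2
    obtain ⟨m, hm, hmin⟩ := (Finset.univ.filter (fun y => (x : γ) < y)).exists_minimal
      ⟨t₀, by simp [hlt]⟩
    simp only [Finset.mem_filter, Finset.mem_univ, true_and] at hm hmin
    exact ⟨m, hm, fun c hc1 hc2 => not_le_of_gt hc2 (hmin (by simpa using hc1) hc2.le)⟩
  have hinj : Function.Injective
      (fun x : {x : γ // ¬ x = t₀} =>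
        (⟨((x : γ), Classical.choose (hcov x)), Classical.choose_spec (hcov x)⟩ :
          {p : γ × γ // p.1 ⋖ p.2})) := by
    intro x y hxy
    apply Subtype.ext
    exact congrArg (fun p => p.1.1) hxy
  have h1 := Nat.card_le_card_of_injective _ hinj
  have h2 : Nat.card γ = Nat.card {x : γ // x = t₀} + Nat.card {x : γ // ¬ x = t₀} := by
    rw [← Nat.card_sum]
    exact (Nat.card_congr (Equiv.sumCompl (fun x => x = t₀))).symm
  have h3 : Nat.card {x : γ // x = t₀} = 1 := by
    rw [Nat.card_eq_one_iff_unique]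
    exact ⟨⟨fun a b => Subtype.ext (a.2.trans b.2.symm)⟩, ⟨⟨t₀, rfl⟩⟩⟩
  omega

theorem card_connectedComponent_eq_one [Nonempty β] :
    Nat.card (coverGraph β).ConnectedComponent = 1 := by
  obtain ⟨b, hb⟩ := exists_bot' (β := β)
  exact card_cc_eq_one_of_bot b hb

theorem card_le_card_covers_add_one [Nonempty β] :
    Nat.card β ≤ Nat.card {p : β × β // p.1 ⋖ p.2} + 1 := by
  obtain ⟨t₀, ht₀⟩ := exists_top' (β := β)
  exact card_le_card_covers_add_one_of_top t₀ ht₀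

theorem nullity_nonneg : 0 ≤ nullity β := by
  rcases isEmpty_or_nonempty β with h | h
  · have h1 : Nat.card β = 0 := Nat.card_of_isEmpty
    have h2 : Nat.card {p : β × β // p.1 ⋖ p.2} = 0 := Nat.card_of_isEmpty
    have h3 : Nat.card (coverGraph β).ConnectedComponent = 0 := by
      haveI : IsEmpty ((coverGraph β).ConnectedComponent) := by
        constructor; intro c
        exact SimpleGraph.ConnectedComponent.ind (fun v => IsEmpty.elim h v) c
      exact Nat.card_of_isEmpty
    unfold nullity; rw [h1, h2, h3]; norm_num
  · have h1 := card_le_card_covers_add_one (β := β)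
    have h2 := card_connectedComponent_eq_one (β := β)
    unfold nullity; rw [h2]; push_cast; omega
end Basics

section Restrict
variable {α : Type*} [Lattice α] [Finite α]

theorem Dismantlable.restrict {S : Set α} (hS : IsSublatticeSet S)
    (hd : Dismantlable α) : @Dismantlable ↥S hS.lattice := by
  classical
  letI := hS.lattice
  rcases Nat.eq_zero_or_pos (Nat.card ↥S) with hzero | hpos
  · haveI : IsEmpty ↥S := by
      rw [Nat.card_eq_zero] at hzero
      rcases hzero with h | h
      · exact h
      · exact absurd (inferInstance : Finite ↥S) (by simpa using h)
    refine ⟨fun j => ∅, ?_, ?_, ?_, ?_⟩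
    · intro i; exact absurd i.2 (by omega)
    · intro i; exact absurd i.2 (by omega)
    · intro i; exact absurd i.2 (by omega)
    · intro x; exact IsEmpty.elim ‹IsEmpty ↥S› x
  obtain ⟨T, hsubl, hmono, hcard, hcov⟩ := hd
  have hScard : Nat.card ↥S = S.ncard := Nat.card_coe_set_eq S
  haveI : Nonempty ↥S := by
    rcases Nat.card_pos_iff.mp hpos with ⟨h, _⟩; exact h
  haveI : Nonempty α := ⟨(Classical.arbitrary ↥S : α)⟩
  have hn : 0 < Nat.card α := Nat.card_pos
  have hTcard : ∀ i, (T i).ncard = (i : ℕ) + 1 := by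
    intro i; rw [← Nat.card_coe_set_eq]; exact hcard i
  set g : ℕ → ℕ := fun m => if hm : m < Nat.card α then (S ∩ T ⟨m, hm⟩).ncard else S.ncard
    with hg
  have hgval : ∀ (i : Fin (Nat.card α)), g (i : ℕ) = (S ∩ T i).ncard := by
    intro i; rw [hg]; simp only [i.2, dif_pos]
  have hgmono : ∀ m m', m ≤ m' → g m ≤ g m' := by
    intro m m' hmm'
    rw [hg]; simp only
    split
    · split
      · exact Set.ncard_le_ncard
          (Set.inter_subset_inter_right _ (hmono _ _ (by simpa [Fin.le_def] using hmm')))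
          (Set.toFinite _)
      · exact Set.ncard_le_ncard Set.inter_subset_left (Set.toFinite _)
    · split
      · omega
      · exact le_refl _
  have hgstep : ∀ m, g (m + 1) ≤ g m + 1 := by
    intro m
    by_cases hm1 : m + 1 < Nat.card α
    · have hm : m < Nat.card α := by omega
      rw [hg]; simp only [dif_pos hm1, dif_pos hm]
      have hsub : S ∩ T ⟨m+1, hm1⟩ ⊆ (S ∩ T ⟨m, hm⟩) ∪ (T ⟨m+1, hm1⟩ \ T ⟨m, hm⟩) := by
        intro x ⟨hx1, hx2⟩
        by_cases h : x ∈ T ⟨m, hm⟩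
        · exact Or.inl ⟨hx1, h⟩
        · exact Or.inr ⟨hx2, h⟩
      have hdiff : (T ⟨m+1, hm1⟩ \ T ⟨m, hm⟩).ncard = 1 := by
        rw [Set.ncard_diff (hmono _ _ (by simp [Fin.le_def])) (Set.toFinite _),
          hTcard, hTcard]
        simp
      calc (S ∩ T ⟨m+1, hm1⟩).ncard
          ≤ ((S ∩ T ⟨m, hm⟩) ∪ (T ⟨m+1, hm1⟩ \ T ⟨m, hm⟩)).ncard :=
            Set.ncard_le_ncard hsub (Set.toFinite _)
        _ ≤ (S ∩ T ⟨m, hm⟩).ncard + (T ⟨m+1, hm1⟩ \ T ⟨m, hm⟩).ncard := Set.ncard_union_le _ _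
        _ = _ := by rw [hdiff]
    · have h2 : g (m+1) = S.ncard := by rw [hg]; simp only [dif_neg hm1]
      by_cases hm : m < Nat.card α
      · have hTuniv : T ⟨m, hm⟩ = Set.univ := by
          apply Set.eq_of_subset_of_ncard_le (Set.subset_univ _)
          rw [Set.ncard_univ, hTcard]
          have hScard2 : S.ncard ≤ Nat.card α := by
            rw [← Set.ncard_univ]
            exact Set.ncard_le_ncard (Set.subset_univ S) (Set.toFinite _)
          simp
          omega
        have : g m = S.ncard := by
          rw [hg]; simp only [dif_pos hm, hTuniv, Set.inter_univ]
        omega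
      · have : g m = S.ncard := by rw [hg]; simp only [dif_neg hm]
        omega
  have hg0 : g 0 ≤ 1 := by
    rw [hg]; simp only [dif_pos hn]
    have := Set.ncard_le_ncard (Set.inter_subset_right (s := S) (t := T ⟨0, hn⟩))
      (Set.toFinite _)
    rw [hTcard] at this; simpa using this
  have hglast : g (Nat.card α - 1) = S.ncard := by
    have hm : Nat.card α - 1 < Nat.card α := by omega
    have hTuniv : T ⟨Nat.card α - 1, hm⟩ = Set.univ := by
      apply Set.eq_of_subset_of_ncard_le (Set.subset_univ _)
      rw [Set.ncard_univ, hTcard]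
      simp
      omega
    rw [hg]; simp only [dif_pos hm, hTuniv, Set.inter_univ]
  -- discrete intermediate value
  have hval : ∀ v : ℕ, 1 ≤ v → v ≤ S.ncard → ∃ m, g m = v ∧ m < Nat.card α := by
    intro v hv1 hv2
    have hex : ∃ m, v ≤ g m := ⟨Nat.card α - 1, by omega⟩
    refine ⟨Nat.find hex, ?_, ?_⟩
    · have h1 := Nat.find_spec hex
      rcases Nat.eq_zero_or_pos (Nat.find hex) with h0 | hposf
      · rw [h0] at h1 ⊢; omega
      · have h2 : ¬ v ≤ g (Nat.find hex - 1) := Nat.find_min hex (by omega)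
        have h3 := hgstep (Nat.find hex - 1)
        have h4 : Nat.find hex - 1 + 1 = Nat.find hex := by omega
        rw [h4] at h3
        omega
    · have := Nat.find_min' hex (show v ≤ g (Nat.card α - 1) by omega)
      omega
  -- minimal index function
  have hidx : ∀ j : Fin (Nat.card ↥S), ∃ m, ((j : ℕ) + 1 ≤ g m ∧ m < Nat.card α) := by
    intro j
    obtain ⟨m, hm1, hm2⟩ := hval ((j:ℕ)+1) (by omega) (by have := j.2; omega)
    exact ⟨m, by omega, hm2⟩
  let I : Fin (Nat.card ↥S) → Fin (Nat.card α) := fun j =>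
    ⟨Nat.find (hidx j), (Nat.find_spec (hidx j)).2⟩
  have hIval : ∀ j, g ((I j : ℕ)) = (j : ℕ) + 1 := by
    intro j
    have h1 := (Nat.find_spec (hidx j)).1
    show g (Nat.find (hidx j)) = (j : ℕ) + 1
    rcases Nat.eq_zero_or_pos (Nat.find (hidx j)) with h0 | hposf
    · rw [h0] at h1 ⊢
      omega
    · have h2 : ¬ ((j:ℕ)+1 ≤ g (Nat.find (hidx j) - 1) ∧ Nat.find (hidx j) - 1 < Nat.card α) :=
        Nat.find_min (hidx j) (by omega)
      have h5 : Nat.find (hidx j) - 1 < Nat.card α := by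
        have := (Nat.find_spec (hidx j)).2; omega
      have h3 := hgstep (Nat.find (hidx j) - 1)
      have h4 : Nat.find (hidx j) - 1 + 1 = Nat.find (hidx j) := by omega
      rw [h4] at h3
      omega
  have hImono : ∀ j j' : Fin (Nat.card ↥S), j ≤ j' → I j ≤ I j' := by
    intro j j' hjj'
    show Nat.find _ ≤ Nat.find _
    apply Nat.find_mono
    intro m ⟨hle, hm⟩
    have : (j : ℕ) ≤ (j' : ℕ) := hjj'
    exact ⟨by omega, hm⟩
  refine ⟨fun j => {x : ↥S | (x : α) ∈ T (I j)}, ?_, ?_, ?_, ?_⟩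
  · intro j x hx y hy
    exact ⟨(hsubl (I j) hx hy).1, (hsubl (I j) hx hy).2⟩
  · intro j j' hjj' x hx
    exact hmono _ _ (hImono j j' hjj') hx
  · intro j
    have heq : Nat.card {x : ↥S | (x : α) ∈ T (I j)} = (S ∩ T (I j)).ncard := by
      rw [← Nat.card_coe_set_eq]
      apply Nat.card_congr
      exact ⟨fun x => ⟨x.1.1, x.1.2, x.2⟩, fun y => ⟨⟨y.1, y.2.1⟩, y.2.2⟩,
        fun x => rfl, fun y => rfl⟩
    rw [heq, ← hgval, hIval]
  · intro x
    refine ⟨⟨Nat.card ↥S - 1, by omega⟩, ?_⟩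
    have h1 : g ((I ⟨Nat.card ↥S - 1, by omega⟩ : ℕ)) = S.ncard := by
      rw [hIval]; simp; omega
    rw [hgval] at h1
    have h2 : S ∩ T (I ⟨Nat.card ↥S - 1, by omega⟩) = S :=
      Set.eq_of_subset_of_ncard_le Set.inter_subset_left (by rw [h1]) (Set.toFinite _)
    show (x : α) ∈ T _
    have h3 : (x : α) ∈ S ∩ T (I ⟨Nat.card ↥S - 1, by omega⟩) := by rw [h2]; exact x.2
    exact h3.2
end Restrict

section Glue
variable {α : Type*} [Lattice α]

theorem sublattice_insert {z p q : α} {W : Set α}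
    (hW : IsSublatticeSet W) (hP : ∀ x, x < z ↔ x ≤ p) (hQ : ∀ x, z < x ↔ q ≤ x)
    (hp : p ∈ W) (hq : q ∈ W) : IsSublatticeSet (W ∪ {z}) := by
  have hzq : z < q := (hQ q).2 le_rfl
  have hpz : p < z := (hP p).2 le_rfl
  have key_sup : ∀ y ∈ W, z ⊔ y ∈ W ∪ {z} := by
    intro y hy
    by_cases h1 : y ≤ z
    · right; simp [sup_eq_left.2 h1]
    by_cases h2 : z ≤ y
    · left; rwa [sup_eq_right.2 h2]
    · left
      have hzlt : z < z ⊔ y := lt_of_le_of_ne le_sup_left (by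
        intro h; exact h1 (sup_eq_left.1 h.symm))
      have hq' : q ≤ z ⊔ y := (hQ _).1 hzlt
      have : z ⊔ y = q ⊔ y := le_antisymm (sup_le (le_trans hzq.le le_sup_left) le_sup_right)
        (sup_le hq' le_sup_right)
      rw [this]; exact (hW hq hy).1
  have key_inf : ∀ y ∈ W, z ⊓ y ∈ W ∪ {z} := by
    intro y hy
    by_cases h1 : z ≤ y
    · right; simp [inf_eq_left.2 h1]
    by_cases h2 : y ≤ z
    · left; rwa [inf_eq_right.2 h2]
    · left
      have hzlt : z ⊓ y < z := lt_of_le_of_ne inf_le_left (by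
        intro h; exact h1 (inf_eq_left.1 h))
      have hp' : z ⊓ y ≤ p := (hP _).1 hzlt
      have : z ⊓ y = p ⊓ y := le_antisymm (le_inf hp' inf_le_right)
        (le_inf (le_trans inf_le_left hpz.le) inf_le_right)
      rw [this]; exact (hW hp hy).2
  intro x hx y hy
  rcases hx with hx | hx <;> rcases hy with hy | hy
  · exact ⟨Or.inl (hW hx hy).1, Or.inl (hW hx hy).2⟩
  · simp only [Set.mem_singleton_iff] at hy; subst hy
    constructor
    · have := key_sup x hx; rwa [sup_comm] at this
    · have := key_inf x hx; rwa [inf_comm] at this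
  · simp only [Set.mem_singleton_iff] at hx; subst hx
    exact ⟨key_sup y hy, key_inf y hy⟩
  · simp only [Set.mem_singleton_iff] at hx hy; subst hx; subst hy
    constructor
    · right; simp
    · right; simp

theorem exists_pq [Finite α] {z : α} (hsub : IsSublatticeSet {x : α | x ≠ z})
    (hnb : ∃ u : α, ¬ z ≤ u) (hnt : ∃ u : α, ¬ u ≤ z) :
    ∃ p q : α, p < z ∧ z < q ∧ (∀ x, x < z ↔ x ≤ p) ∧ (∀ x, z < x ↔ q ≤ x) := by
  classical
  haveI : Nonempty α := ⟨z⟩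
  haveI := Fintype.ofFinite α
  obtain ⟨lbo, hlbo⟩ := exists_bot' (β := α)
  obtain ⟨hi, hhi⟩ := exists_top' (β := α)
  obtain ⟨u1, hu1⟩ := hnb
  obtain ⟨u2, hu2⟩ := hnt
  have hboz : lbo < z := lt_of_le_of_ne (hlbo z) (by rintro rfl; exact hu1 (hlbo u1))
  have htoz : z < hi := lt_of_le_of_ne (hhi z) (by
    intro h; exact hu2 (h ▸ hhi u2))
  obtain ⟨p, hp, hpmax⟩ := (Finset.univ.filter (fun x => x < z)).exists_maximal
    ⟨lbo, by simp [hboz]⟩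
  obtain ⟨q, hq, hqmin⟩ := (Finset.univ.filter (fun x => z < x)).exists_minimal
    ⟨hi, by simp [htoz]⟩
  simp only [Finset.mem_filter, Finset.mem_univ, true_and] at hp hq hpmax hqmin
  refine ⟨p, q, hp, hq, fun x => ⟨fun hx => ?_, fun hx => lt_of_le_of_lt hx hp⟩,
    fun x => ⟨fun hx => ?_, fun hx => lt_of_lt_of_le hq hx⟩⟩
  · have hmem : x ⊔ p ≠ z := (hsub (Set.mem_setOf.2 (ne_of_lt hx))
      (Set.mem_setOf.2 (ne_of_lt hp))).1
    have hle : x ⊔ p ≤ z := sup_le hx.le hp.le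
    have hlt : x ⊔ p < z := lt_of_le_of_ne hle hmem
    have := fun h => not_le_of_gt h (hpmax (y := x ⊔ p) (by simpa using hlt) h.le)
    have heq : x ⊔ p = p := le_antisymm (by
      by_contra hcon
      exact this (lt_of_le_of_ne le_sup_right (fun h => hcon (h ▸ le_rfl)))) le_sup_right
    calc x ≤ x ⊔ p := le_sup_left
      _ = p := heq
  · have hmem : x ⊓ q ≠ z := (hsub (Set.mem_setOf.2 (ne_of_gt hx))
      (Set.mem_setOf.2 (ne_of_gt hq))).2
    have hle : z ≤ x ⊓ q := le_inf hx.le hq.le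
    have hlt : z < x ⊓ q := lt_of_le_of_ne hle (fun h => hmem h.symm)
    have := fun h => not_le_of_gt h (hqmin (y := x ⊓ q) (by simpa using hlt) h.le)
    have heq : x ⊓ q = q := le_antisymm inf_le_right (by
      by_contra hcon
      exact this (lt_of_le_of_ne inf_le_right (fun h => hcon (le_of_eq h.symm))))
    calc q = x ⊓ q := heq.symm
      _ ≤ x := inf_le_left

theorem isAdjunctPair_pq {z p q : α} (hsub : IsSublatticeSet {x : α | x ≠ z})
    (hpz : p < z) (hzq : z < q) (hP : ∀ x, x < z ↔ x ≤ p) (hQ : ∀ x, z < x ↔ q ≤ x)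
    (hw : ∃ w, w ≠ z ∧ p < w ∧ w < q) : IsAdjunctPair p q := by
  obtain ⟨w, hwz, hw1, hw2⟩ := hw
  refine ⟨lt_trans hpz hzq, {x : α | x ≠ z}, {z}, ⟨p, Set.mem_setOf.2 (ne_of_lt hpz)⟩,
    ⟨z, rfl⟩, ?_, ?_, hsub, ?_, Set.mem_setOf.2 (ne_of_lt hpz),
    Set.mem_setOf.2 (ne_of_gt hzq), ⟨w, Set.mem_setOf.2 hwz, hw1, hw2⟩, ?_⟩
  · rw [Set.disjoint_singleton_right]
    simp
  · ext x; simp [em]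
  · intro x hx y hy
    simp only [Set.mem_singleton_iff] at hx hy; subst hx; subst hy
    simp
  · intro x hx y hy
    simp only [Set.mem_singleton_iff] at hy; subst hy
    simp only [Set.mem_setOf_eq] at hx
    constructor
    · constructor
      · intro h; exact (hP x).1 (lt_of_le_of_ne h hx)
      · intro h; exact ((hP x).2 h).le
    · constructor
      · intro h; exact (hQ x).1 (lt_of_le_of_ne h (Ne.symm hx))
      · intro h; exact ((hQ x).2 h).le

theorem isAdjunctPair_glueK {z a b : α} {KK MM : Set α}
    (hMne : MM.Nonempty) (hd : Disjoint KK MM) (hzM : z ∉ MM)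
    (hu : KK ∪ MM = {x : α | x ≠ z}) (hKs : IsSublatticeSet (KK ∪ {z}))
    (hMs : IsSublatticeSet MM)
    (haK : a ∈ KK) (hbK : b ∈ KK) (hab : a < b) (hwit : ∃ w ∈ KK, a < w ∧ w < b)
    (hcond : ∀ x ∈ KK, ∀ y ∈ MM, (x ≤ y ↔ x ≤ a) ∧ (y ≤ x ↔ b ≤ x))
    (hz : ∀ y ∈ MM, (z ≤ y ↔ z ≤ a) ∧ (y ≤ z ↔ b ≤ z)) : IsAdjunctPair a b := by
  obtain ⟨w, hwK, hw1, hw2⟩ := hwit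
  refine ⟨hab, KK ∪ {z}, MM, ⟨a, Or.inl haK⟩, hMne, ?_, ?_, hKs, hMs, Or.inl haK,
    Or.inl hbK, ⟨w, Or.inl hwK, hw1, hw2⟩, ?_⟩
  · rw [Set.disjoint_union_left]
    exact ⟨hd, by rwa [Set.disjoint_singleton_left]⟩
  · ext x
    simp only [Set.mem_union, Set.mem_singleton_iff, Set.mem_univ, iff_true]
    by_cases hxz : x = z
    · exact Or.inl (Or.inr hxz)
    · have : x ∈ KK ∪ MM := by rw [hu]; exact hxz
      rcases this with h | h
      · exact Or.inl (Or.inl h)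
      · exact Or.inr h
  · intro x hx y hy
    rcases hx with hx | hx
    · exact hcond x hx y hy
    · simp only [Set.mem_singleton_iff] at hx; subst hx
      exact hz y hy

theorem isAdjunctPair_glueM {z a b : α} {KK MM : Set α}
    (hKne : KK.Nonempty) (hMne : MM.Nonempty) (hd : Disjoint KK MM) (hzK : z ∉ KK)
    (hu : KK ∪ MM = {x : α | x ≠ z}) (hKs : IsSublatticeSet KK)
    (hMs : IsSublatticeSet (MM ∪ {z}))
    (haK : a ∈ KK) (hbK : b ∈ KK) (hab : a < b) (hwit : ∃ w ∈ KK, a < w ∧ w < b)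
    (hcond : ∀ x ∈ KK, ∀ y ∈ MM, (x ≤ y ↔ x ≤ a) ∧ (y ≤ x ↔ b ≤ x))
    (hz : ∀ x ∈ KK, (x ≤ z ↔ x ≤ a) ∧ (z ≤ x ↔ b ≤ x)) : IsAdjunctPair a b := by
  refine ⟨hab, KK, MM ∪ {z}, hKne, ⟨z, Or.inr rfl⟩, ?_, ?_, hKs, hMs, haK, hbK, hwit, ?_⟩
  · rw [Set.disjoint_union_right]
    exact ⟨hd, by rwa [Set.disjoint_singleton_right]⟩
  · ext x
    simp only [Set.mem_union, Set.mem_singleton_iff, Set.mem_univ, iff_true]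
    by_cases hxz : x = z
    · exact Or.inr (Or.inr hxz)
    · have : x ∈ KK ∪ MM := by rw [hu]; exact hxz
      rcases this with h | h
      · exact Or.inl h
      · exact Or.inr (Or.inl h)
  · intro x hx y hy
    rcases hy with hy | hy
    · exact hcond x hx y hy
    · simp only [Set.mem_singleton_iff] at hy; subst hy
      exact hz x hx
end Glue
section Structure

theorem exists_adjunctPair_aux :
    ∀ (n : ℕ) (α : Type u_1) [Lattice α] [Finite α],
    Nat.card α ≤ n → Dismantlable α → (∃ u v : α, ¬ u ≤ v ∧ ¬ v ≤ u) →
    ∃ a b : α, IsAdjunctPair a b := by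
  intro n
  induction n with
  | zero =>
    intro α _ _ hcard _ h
    obtain ⟨u, v, _, _⟩ := h
    haveI : Nonempty α := ⟨u⟩
    have := Nat.card_pos (α := α)
    omega
  | succ n ih =>
    intro α _ _ hcard hd hpair
    classical
    obtain ⟨u, v, huv1, huv2⟩ := hpair
    have huvne : u ≠ v := fun h => huv1 (h ▸ le_rfl)
    haveI : Nontrivial α := ⟨u, v, huvne⟩
    have hNα : 2 ≤ Nat.card α := Finite.one_lt_card
    have hdcopy := hd
    obtain ⟨T, hsubl, hmono, hcardT, hcov⟩ := hd
    set i₀ : Fin (Nat.card α) := ⟨Nat.card α - 2, by omega⟩ with hi₀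
    -- the removed element z
    have hKcard : (T i₀).ncard = Nat.card α - 1 := by
      rw [← Nat.card_coe_set_eq, hcardT]
      simp [hi₀]
      omega
    have hcompl : (Set.univ \ T i₀).ncard = 1 := by
      rw [Set.ncard_diff (Set.subset_univ _) (Set.toFinite _), Set.ncard_univ, hKcard]
      omega
    obtain ⟨z, hz⟩ := Set.ncard_eq_one.1 hcompl
    have hzK : T i₀ = {x : α | x ≠ z} := by
      ext x
      simp only [Set.mem_setOf_eq]
      constructor
      · intro hx hxz
        subst hxz
        have : x ∈ Set.univ \ T i₀ := by rw [hz]; rfl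
        exact this.2 hx
      · intro hx
        by_contra hcon
        have : x ∈ Set.univ \ T i₀ := ⟨trivial, hcon⟩
        rw [hz] at this
        exact hx this
    have hK'sub : IsSublatticeSet {x : α | x ≠ z} := hzK ▸ hsubl i₀
    have hK'card : Nat.card ↥{x : α | x ≠ z} ≤ n := by
      rw [Nat.card_coe_set_eq, ← hzK, hKcard]
      omega
    -- the recursion helper
    have hrec : (∃ u' v' : α, u' ≠ z ∧ v' ≠ z ∧ ¬ u' ≤ v' ∧ ¬ v' ≤ u') →
        ∃ (a b : α) (KK MM : Set α), a < b ∧ a ∈ KK ∧ b ∈ KK ∧ MM.Nonempty ∧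
          Disjoint KK MM ∧ (KK ∪ MM = {x : α | x ≠ z}) ∧ IsSublatticeSet KK ∧
          IsSublatticeSet MM ∧ (∃ w ∈ KK, a < w ∧ w < b) ∧
          (∀ x ∈ KK, ∀ y ∈ MM, (x ≤ y ↔ x ≤ a) ∧ (y ≤ x ↔ b ≤ x)) := by
      rintro ⟨u', v', hu'z, hv'z, h1, h2⟩
      letI latK := hK'sub.lattice
      have hdisK := Dismantlable.restrict hK'sub hdcopy
      have hpair' : ∃ s t : ↥{x : α | x ≠ z}, ¬ s ≤ t ∧ ¬ t ≤ s :=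
        ⟨⟨u', hu'z⟩, ⟨v', hv'z⟩, h1, h2⟩
      obtain ⟨a', b', hlt, K, M, hKne, hMne, hdisj, hunion, hKs, hMs, haK, hbK,
        ⟨w₀, hw₀K, hw₀1, hw₀2⟩, hcond⟩ :=
        @ih ↥{x : α | x ≠ z} latK _ hK'card hdisK hpair'
      refine ⟨(a' : α), (b' : α), Subtype.val '' K, Subtype.val '' M, hlt, ⟨a', haK, rfl⟩,
        ⟨b', hbK, rfl⟩, (hMne.image _), ?_, ?_, ?_, ?_, ⟨(w₀ : α), ⟨w₀, hw₀K, rfl⟩, hw₀1, hw₀2⟩, ?_⟩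
      · exact Set.disjoint_image_of_injective Subtype.val_injective hdisj
      · rw [← Set.image_union, hunion]
        ext x
        simp only [Set.mem_image, Set.mem_setOf_eq]
        constructor
        · rintro ⟨x', _, rfl⟩; exact x'.2
        · intro hx; exact ⟨⟨x, hx⟩, trivial, rfl⟩
      · rintro x ⟨x', hx', rfl⟩ y ⟨y', hy', rfl⟩
        exact ⟨⟨x' ⊔ y', (hKs hx' hy').1, rfl⟩, ⟨x' ⊓ y', (hKs hx' hy').2, rfl⟩⟩
      · rintro x ⟨x', hx', rfl⟩ y ⟨y', hy', rfl⟩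
        exact ⟨⟨x' ⊔ y', (hMs hx' hy').1, rfl⟩, ⟨x' ⊓ y', (hMs hx' hy').2, rfl⟩⟩
      · rintro x ⟨x', hx', rfl⟩ y ⟨y', hy', rfl⟩
        exact hcond x' hx' y' hy'

    -- basic membership facts will be re-derived in each branch
    by_cases hbot : ∀ x : α, z ≤ x
    · -- z is the bottom element
      have huz : u ≠ z := fun h => huv1 (h ▸ hbot v)
      have hvz : v ≠ z := fun h => huv2 (h ▸ hbot u)
      obtain ⟨a, b, KK, MM, hab, haK, hbK, hMne, hdisj, hunion, hKKs, hMMs, hwit, hcond⟩ :=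
        hrec ⟨u, v, huz, hvz, huv1, huv2⟩
      have hmem_ne : ∀ x, x ∈ KK ∪ MM → x ≠ z := fun x hx => by
        rw [hunion] at hx; exact hx
      have hKKz : ∀ x ∈ KK, x ≠ z := fun x hx => hmem_ne x (Or.inl hx)
      have hMMz : ∀ x ∈ MM, x ≠ z := fun x hx => hmem_ne x (Or.inr hx)
      refine ⟨a, b, isAdjunctPair_glueK hMne hdisj (fun h => hMMz z h rfl) hunion ?_ hMMs
        haK hbK hab hwit hcond ?_⟩
      · intro x hx y hy
        rcases hx with hx | hx <;> rcases hy with hy | hy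
        · exact ⟨Or.inl (hKKs hx hy).1, Or.inl (hKKs hx hy).2⟩
        · simp only [Set.mem_singleton_iff] at hy; subst hy
          constructor
          · rw [sup_eq_left.2 (hbot x)]; exact Or.inl hx
          · rw [inf_eq_right.2 (hbot x)]; exact Or.inr rfl
        · simp only [Set.mem_singleton_iff] at hx; subst hx
          constructor
          · rw [sup_eq_right.2 (hbot y)]; exact Or.inl hy
          · rw [inf_eq_left.2 (hbot y)]; exact Or.inr rfl
        · simp only [Set.mem_singleton_iff] at hx hy; subst hx; subst hy
          constructor
          · right; simp
          · right; simp
      · intro y hy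
        constructor
        · exact iff_of_true (hbot y) (hbot a)
        · constructor
          · intro h; exact absurd (le_antisymm h (hbot y)) (hMMz y hy)
          · intro h; exact absurd (le_antisymm h (hbot b)) (hKKz b hbK)
    by_cases htop : ∀ x : α, x ≤ z
    · -- z is the top element
      have huz : u ≠ z := fun h => huv2 (h ▸ htop v)
      have hvz : v ≠ z := fun h => huv1 (h ▸ htop u)
      obtain ⟨a, b, KK, MM, hab, haK, hbK, hMne, hdisj, hunion, hKKs, hMMs, hwit, hcond⟩ :=
        hrec ⟨u, v, huz, hvz, huv1, huv2⟩
      have hmem_ne : ∀ x, x ∈ KK ∪ MM → x ≠ z := fun x hx => by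
        rw [hunion] at hx; exact hx
      have hKKz : ∀ x ∈ KK, x ≠ z := fun x hx => hmem_ne x (Or.inl hx)
      have hMMz : ∀ x ∈ MM, x ≠ z := fun x hx => hmem_ne x (Or.inr hx)
      refine ⟨a, b, isAdjunctPair_glueK hMne hdisj (fun h => hMMz z h rfl) hunion ?_ hMMs
        haK hbK hab hwit hcond ?_⟩
      · intro x hx y hy
        rcases hx with hx | hx <;> rcases hy with hy | hy
        · exact ⟨Or.inl (hKKs hx hy).1, Or.inl (hKKs hx hy).2⟩
        · simp only [Set.mem_singleton_iff] at hy; subst hy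
          constructor
          · rw [sup_eq_right.2 (htop x)]; exact Or.inr rfl
          · rw [inf_eq_left.2 (htop x)]; exact Or.inl hx
        · simp only [Set.mem_singleton_iff] at hx; subst hx
          constructor
          · rw [sup_eq_left.2 (htop y)]; exact Or.inr rfl
          · rw [inf_eq_right.2 (htop y)]; exact Or.inl hy
        · simp only [Set.mem_singleton_iff] at hx hy; subst hx; subst hy
          constructor
          · right; simp
          · right; simp
      · intro y hy
        constructor
        · constructor
          · intro h; exact absurd (le_antisymm (htop y) h) (hMMz y hy)
          · intro h; exact absurd (le_antisymm (htop a) h) (hKKz a haK)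
        · exact iff_of_true (htop y) (htop b)
    -- z is neither bottom nor top
    push_neg at hbot htop
    obtain ⟨p, q, hpz, hzq, hP, hQ⟩ := exists_pq hK'sub hbot htop
    by_cases hw : ∃ w, w ≠ z ∧ p < w ∧ w < q
    · exact ⟨p, q, isAdjunctPair_pq hK'sub hpz hzq hP hQ hw⟩
    push_neg at hw
    -- K' contains an incomparable pair
    have hK'pair : ∃ u' v' : α, u' ≠ z ∧ v' ≠ z ∧ ¬ u' ≤ v' ∧ ¬ v' ≤ u' := by
      by_contra hcon
      push_neg at hcon
      have hcomp : ∀ x y : α, x ≠ z → y ≠ z → x ≤ y ∨ y ≤ x := by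
        intro x y hx hy
        by_cases h : x ≤ y
        · exact Or.inl h
        · exact Or.inr (hcon x y hx hy h)
      have hsplit : ∀ x : α, x ≠ z → x ≤ p ∨ q ≤ x := by
        intro x hx
        rcases hcomp x p hx (ne_of_lt hpz) with h | h
        · exact Or.inl h
        · by_cases hxp : x ≤ p
          · exact Or.inl hxp
          · have hplt : p < x := lt_of_le_of_ne h (fun he => hxp (le_of_eq he.symm))
            rcases hcomp x q hx (ne_of_gt hzq) with h2 | h2
            · by_cases hxq : q ≤ x
              · exact Or.inr hxq
              · have : x < q := lt_of_le_of_ne h2 (fun he => hxq (le_of_eq he.symm))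
                exact absurd this (hw x hx hplt)
            · exact Or.inr h2
      have hwz : ∃ w : α, w ≠ z ∧ ¬ w ≤ z ∧ ¬ z ≤ w := by
        by_cases hu : u = z
        · subst hu
          exact ⟨v, fun h => huv1 (h ▸ le_rfl), huv2, huv1⟩
        · by_cases hv : v = z
          · subst hv
            exact ⟨u, hu, huv1, huv2⟩
          · rcases hcomp u v hu hv with h | h
            · exact absurd h huv1
            · exact absurd h huv2
      obtain ⟨w, hwzne, hw1, hw2⟩ := hwz
      rcases hsplit w hwzne with h | h
      · exact hw1 (le_trans h hpz.le)
      · exact hw2 (le_trans hzq.le h)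
    obtain ⟨a, b, KK, MM, hab, haK, hbK, hMne, hdisj, hunion, hKKs, hMMs, hwit, hcond⟩ :=
      hrec hK'pair
    have hmem_ne : ∀ x, x ∈ KK ∪ MM → x ≠ z := fun x hx => by
      rw [hunion] at hx; exact hx
    have hKKz : ∀ x ∈ KK, x ≠ z := fun x hx => hmem_ne x (Or.inl hx)
    have hMMz : ∀ x ∈ MM, x ≠ z := fun x hx => hmem_ne x (Or.inr hx)
    have hzKK : z ∉ KK := fun h => hKKz z h rfl
    have hzMM : z ∉ MM := fun h => hMMz z h rfl
    have hpmem : p ∈ KK ∪ MM := by rw [hunion]; exact ne_of_lt hpz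
    have hqmem : q ∈ KK ∪ MM := by rw [hunion]; exact ne_of_gt hzq
    -- helpers translating comparabilities with z
    have hle_z : ∀ x, x ≠ z → (x ≤ z ↔ x ≤ p) := fun x hx =>
      ⟨fun h => (hP x).1 (lt_of_le_of_ne h hx), fun h => ((hP x).2 h).le⟩
    have hz_le : ∀ x, x ≠ z → (z ≤ x ↔ q ≤ x) := fun x hx =>
      ⟨fun h => (hQ x).1 (lt_of_le_of_ne h (Ne.symm hx)), fun h => ((hQ x).2 h).le⟩
    rcases hpmem with hpK | hpM <;> rcases hqmem with hqK | hqM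
    · -- case B : p, q ∈ KK ; z joins KK
      refine ⟨a, b, isAdjunctPair_glueK hMne hdisj hzMM hunion
        (sublattice_insert hKKs hP hQ hpK hqK) hMMs haK hbK hab hwit hcond ?_⟩
      intro y hy
      constructor
      · rw [hz_le y (hMMz y hy), hz_le a (hKKz a haK)]
        exact (hcond q hqK y hy).1
      · rw [hle_z y (hMMz y hy), hle_z b (hKKz b hbK)]
        exact (hcond p hpK y hy).2
    · -- case C : p ∈ KK, q ∈ MM (and no witness) ; z joins MM as its new bottom
      obtain ⟨m₀, hm₀M, hm₀min⟩ : ∃ m ∈ MM, ∀ y ∈ MM, m ≤ y := by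
        obtain ⟨m, hmM, hmmin⟩ := Set.Finite.exists_minimalFor id MM (Set.toFinite MM) hMne
        refine ⟨m, hmM, fun y hy => ?_⟩
        have h1 : m ⊓ y ∈ MM := (hMMs hmM hy).2
        have h2 := hmmin h1 (inf_le_left : m ⊓ y ≤ m)
        simp only [id] at h2
        calc m = m ⊓ y := le_antisymm h2 inf_le_left
          _ ≤ y := inf_le_right
      have hpa : p ≤ a := (hcond p hpK q hqM).1.1 (le_trans hpz.le hzq.le)
      have ham₀ : a < m₀ := by
        have h1 : a ≤ m₀ := (hcond a haK m₀ hm₀M).1.2 le_rfl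
        exact lt_of_le_of_ne h1 (fun h => Set.disjoint_left.1 hdisj haK (h ▸ hm₀M))
      have hm₀q : m₀ = q := by
        by_contra hne
        have h1 : m₀ < q := lt_of_le_of_ne (hm₀min q hqM) hne
        have h2 : p < m₀ := lt_of_le_of_lt hpa ham₀
        exact hw m₀ (hMMz m₀ hm₀M) h2 h1
      have hpa' : p = a := by
        by_contra hne
        have h1 : p < a := lt_of_le_of_ne hpa hne
        have h2 : a < q := hm₀q ▸ ham₀
        exact hw a (hKKz a haK) h1 h2
      have hzley : ∀ y ∈ MM, z ≤ y := fun y hy =>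
        le_trans hzq.le (le_trans (hm₀q ▸ hm₀min y hy : q ≤ y) le_rfl)
      refine ⟨a, b, isAdjunctPair_glueM ⟨a, haK⟩ hMne hdisj hzKK hunion hKKs ?_
        haK hbK hab hwit hcond ?_⟩
      · intro x hx y hy
        rcases hx with hx | hx <;> rcases hy with hy | hy
        · exact ⟨Or.inl (hMMs hx hy).1, Or.inl (hMMs hx hy).2⟩
        · simp only [Set.mem_singleton_iff] at hy; subst hy
          constructor
          · rw [sup_eq_left.2 (hzley x hx)]; exact Or.inl hx
          · rw [inf_eq_right.2 (hzley x hx)]; exact Or.inr rfl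
        · simp only [Set.mem_singleton_iff] at hx; subst hx
          constructor
          · rw [sup_eq_right.2 (hzley y hy)]; exact Or.inl hy
          · rw [inf_eq_left.2 (hzley y hy)]; exact Or.inr rfl
        · simp only [Set.mem_singleton_iff] at hx hy; subst hx; subst hy
          exact ⟨Or.inr (by simp), Or.inr (by simp)⟩
      · intro x hx
        constructor
        · rw [hle_z x (hKKz x hx), hpa']
        · rw [hz_le x (hKKz x hx)]
          exact (hcond x hx q hqM).2
    · -- case D : p ∈ MM, q ∈ KK (and no witness) ; z joins MM as its new top
      obtain ⟨m₁, hm₁M, hm₁max⟩ : ∃ m ∈ MM, ∀ y ∈ MM, y ≤ m := by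
        obtain ⟨m, hmM, hmmax⟩ := Set.Finite.exists_maximalFor id MM (Set.toFinite MM) hMne
        refine ⟨m, hmM, fun y hy => ?_⟩
        have h1 : m ⊔ y ∈ MM := (hMMs hmM hy).1
        have h2 := hmmax h1 (le_sup_left : m ≤ m ⊔ y)
        simp only [id] at h2
        calc y ≤ m ⊔ y := le_sup_right
          _ = m := le_antisymm h2 le_sup_left
      have hbq : b ≤ q := (hcond q hqK p hpM).2.1 (le_trans hpz.le hzq.le)
      have hm₁b : m₁ < b := by
        have h1 : m₁ ≤ b := (hcond b hbK m₁ hm₁M).2.2 le_rfl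
        exact lt_of_le_of_ne h1 (fun h => Set.disjoint_left.1 hdisj hbK (h ▸ hm₁M))
      have hm₁p : p = m₁ := by
        by_contra hne
        have h1 : p < m₁ := lt_of_le_of_ne (hm₁max p hpM) hne
        have h2 : m₁ < q := lt_of_lt_of_le hm₁b hbq
        exact hw m₁ (hMMz m₁ hm₁M) h1 h2
      have hqb : q = b := by
        by_contra hne
        have h1 : b < q := lt_of_le_of_ne hbq (fun h => hne h.symm)
        have h2 : p < b := hm₁p ▸ hm₁b
        exact hw b (hKKz b hbK) h2 h1
      have hylez : ∀ y ∈ MM, y ≤ z := fun y hy =>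
        le_trans (le_trans (hm₁max y hy) (hm₁p ▸ le_rfl : m₁ ≤ p)) hpz.le
      refine ⟨a, b, isAdjunctPair_glueM ⟨a, haK⟩ hMne hdisj hzKK hunion hKKs ?_
        haK hbK hab hwit hcond ?_⟩
      · intro x hx y hy
        rcases hx with hx | hx <;> rcases hy with hy | hy
        · exact ⟨Or.inl (hMMs hx hy).1, Or.inl (hMMs hx hy).2⟩
        · simp only [Set.mem_singleton_iff] at hy; subst hy
          constructor
          · rw [sup_eq_right.2 (hylez x hx)]; exact Or.inr rfl
          · rw [inf_eq_left.2 (hylez x hx)]; exact Or.inl hx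
        · simp only [Set.mem_singleton_iff] at hx; subst hx
          constructor
          · rw [sup_eq_left.2 (hylez y hy)]; exact Or.inr rfl
          · rw [inf_eq_right.2 (hylez y hy)]; exact Or.inl hy
        · simp only [Set.mem_singleton_iff] at hx hy; subst hx; subst hy
          exact ⟨Or.inr (by simp), Or.inr (by simp)⟩
      · intro x hx
        constructor
        · rw [hle_z x (hKKz x hx)]
          exact (hcond x hx p hpM).1
        · rw [hz_le x (hKKz x hx), hqb]
    · -- case A : p, q ∈ MM ; z joins MM
      refine ⟨a, b, isAdjunctPair_glueM ⟨a, haK⟩ hMne hdisj hzKK hunion hKKs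
        (sublattice_insert hMMs hP hQ hpM hqM) haK hbK hab hwit hcond ?_⟩
      intro x hx
      constructor
      · rw [hle_z x (hKKz x hx)]
        exact (hcond x hx p hpM).1
      · rw [hz_le x (hKKz x hx)]
        exact (hcond x hx q hqM).2

end Structure

section Nullity
variable {α : Type*} [Lattice α] [Finite α]

theorem sublattice_min {S : Set α} (hS : IsSublatticeSet S) (hne : S.Nonempty) :
    ∃ m ∈ S, ∀ y ∈ S, m ≤ y := by
  obtain ⟨m, hmM, hmmin⟩ := Set.Finite.exists_minimalFor id S (Set.toFinite S) hne
  refine ⟨m, hmM, fun y hy => ?_⟩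
  have h1 : m ⊓ y ∈ S := (hS hmM hy).2
  have h2 := hmmin h1 (inf_le_left : m ⊓ y ≤ m)
  simp only [id] at h2
  calc m = m ⊓ y := le_antisymm h2 inf_le_left
    _ ≤ y := inf_le_right

theorem sublattice_max {S : Set α} (hS : IsSublatticeSet S) (hne : S.Nonempty) :
    ∃ m ∈ S, ∀ y ∈ S, y ≤ m := by
  obtain ⟨m, hmM, hmmax⟩ := Set.Finite.exists_maximalFor id S (Set.toFinite S) hne
  refine ⟨m, hmM, fun y hy => ?_⟩
  have h1 : m ⊔ y ∈ S := (hS hmM hy).1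
  have h2 := hmmax h1 (le_sup_left : m ≤ m ⊔ y)
  simp only [id] at h2
  calc y ≤ m ⊔ y := le_sup_right
    _ = m := le_antisymm h2 le_sup_left

theorem nullity_adjunct {a b : α} {K M : Set α}
    (hKs : IsSublatticeSet K) (hMs : IsSublatticeSet M)
    (hKne : K.Nonempty) (hMne : M.Nonempty) (hdisj : Disjoint K M)
    (hunion : K ∪ M = Set.univ)
    (haK : a ∈ K) (hbK : b ∈ K) (hab : a < b) (hwit : ∃ w ∈ K, a < w ∧ w < b)
    (hcond : ∀ x ∈ K, ∀ y ∈ M, (x ≤ y ↔ x ≤ a) ∧ (y ≤ x ↔ b ≤ x)) :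
    nullity ↥K + nullity ↥M + 1 ≤ nullity α := by
  classical
  haveI : Nonempty ↥K := hKne.to_subtype
  haveI : Nonempty ↥M := hMne.to_subtype
  haveI : Nonempty α := ⟨a⟩
  have hKM : ∀ x : α, x ∈ K → x ∈ M → False := fun x h1 h2 => Set.disjoint_left.1 hdisj h1 h2
  have hmemKM : ∀ x : α, x ∈ K ∪ M := fun x => by rw [hunion]; trivial
  obtain ⟨m₀, hm₀M, hm₀min⟩ := sublattice_min hMs hMne
  obtain ⟨m₁, hm₁M, hm₁max⟩ := sublattice_max hMs hMne
  -- cardinalities add up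
  have hcardα : Nat.card α = Nat.card ↥K + Nat.card ↥M := by
    rw [Nat.card_coe_set_eq, Nat.card_coe_set_eq,
      ← Set.ncard_union_eq hdisj (Set.toFinite _) (Set.toFinite _), hunion, Set.ncard_univ]
  -- connected components
  obtain ⟨k₀, hk₀K, hk₀min⟩ := sublattice_min hKs hKne
  have hcK : Nat.card (coverGraph ↥K).ConnectedComponent = 1 :=
    card_cc_eq_one_of_bot (⟨k₀, hk₀K⟩ : ↥K) (fun x => hk₀min x.1 x.2)
  have hcM : Nat.card (coverGraph ↥M).ConnectedComponent = 1 :=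
    card_cc_eq_one_of_bot (⟨m₀, hm₀M⟩ : ↥M) (fun x => hm₀min x.1 x.2)
  haveI : Nonempty (coverGraph α).ConnectedComponent :=
    ⟨(coverGraph α).connectedComponentMk a⟩
  have hcα : 1 ≤ Nat.card (coverGraph α).ConnectedComponent := Nat.card_pos
  -- covering pairs
  have hKcov : ∀ s : {p : ↥K × ↥K // p.1 ⋖ p.2}, ((s.1.1 : α) ⋖ (s.1.2 : α)) := by
    rintro ⟨⟨x, y⟩, hxy⟩
    refine ⟨Subtype.coe_lt_coe.2 hxy.1, ?_⟩
    intro c hc1 hc2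
    by_cases hcK : c ∈ K
    · exact hxy.2 (show x < (⟨c, hcK⟩ : ↥K) from Subtype.coe_lt_coe.1 hc1)
        (Subtype.coe_lt_coe.1 hc2)
    · have hcM : c ∈ M := (hmemKM c).resolve_left hcK
      have h1 : (x : α) ≤ a := (hcond x.1 x.2 c hcM).1.1 hc1.le
      have h2 : b ≤ (y : α) := (hcond y.1 y.2 c hcM).2.1 hc2.le
      obtain ⟨w, hwK, hw1, hw2⟩ := hwit
      exact hxy.2 (show x < (⟨w, hwK⟩ : ↥K) from Subtype.coe_lt_coe.1 (lt_of_le_of_lt h1 hw1))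
        (Subtype.coe_lt_coe.1 (lt_of_lt_of_le hw2 h2))
  have hMcov : ∀ s : {p : ↥M × ↥M // p.1 ⋖ p.2}, ((s.1.1 : α) ⋖ (s.1.2 : α)) := by
    rintro ⟨⟨x, y⟩, hxy⟩
    refine ⟨Subtype.coe_lt_coe.2 hxy.1, ?_⟩
    intro c hc1 hc2
    by_cases hcM : c ∈ M
    · exact hxy.2 (show x < (⟨c, hcM⟩ : ↥M) from Subtype.coe_lt_coe.1 hc1)
        (Subtype.coe_lt_coe.1 hc2)
    · have hcK : c ∈ K := (hmemKM c).resolve_right hcM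
      have h1 : b ≤ c := (hcond c hcK x.1 x.2).2.1 hc1.le
      have h2 : c ≤ a := (hcond c hcK y.1 y.2).1.1 hc2.le
      exact absurd (le_trans h1 h2) (not_le_of_gt hab)
  have hcross1 : a ⋖ m₀ := by
    refine ⟨lt_of_le_of_ne ((hcond a haK m₀ hm₀M).1.2 le_rfl)
      (fun h => hKM a haK (h ▸ hm₀M)), ?_⟩
    intro c hc1 hc2
    rcases hmemKM c with hcK | hcM
    · exact absurd ((hcond c hcK m₀ hm₀M).1.1 hc2.le) (not_le_of_gt hc1)
    · exact absurd (hm₀min c hcM) (not_le_of_gt hc2)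
  have hcross2 : m₁ ⋖ b := by
    refine ⟨lt_of_le_of_ne ((hcond b hbK m₁ hm₁M).2.2 le_rfl)
      (fun h => hKM b hbK (h.symm ▸ hm₁M)), ?_⟩
    intro c hc1 hc2
    rcases hmemKM c with hcK | hcM
    · exact absurd ((hcond c hcK m₁ hm₁M).2.1 hc1.le) (not_le_of_gt hc2)
    · exact absurd (hm₁max c hcM) (not_le_of_gt hc1)
  -- the injection
  set F : ({p : ↥K × ↥K // p.1 ⋖ p.2} ⊕ {p : ↥M × ↥M // p.1 ⋖ p.2}) ⊕ Bool →
      {p : α × α // p.1 ⋖ p.2} := fun s =>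
    match s with
    | .inl (.inl t) => ⟨((t.1.1 : α), (t.1.2 : α)), hKcov t⟩
    | .inl (.inr t) => ⟨((t.1.1 : α), (t.1.2 : α)), hMcov t⟩
    | .inr true => ⟨(a, m₀), hcross1⟩
    | .inr false => ⟨(m₁, b), hcross2⟩
    with hF
  have hFinj : Function.Injective F := by
    intro s t h
    have hval : (F s).1 = (F t).1 := congrArg Subtype.val h
    rcases s with (⟨⟨x1, x2⟩, hs⟩ | ⟨⟨x1, x2⟩, hs⟩) | (_ | _) <;>
      rcases t with (⟨⟨y1, y2⟩, ht⟩ | ⟨⟨y1, y2⟩, ht⟩) | (_ | _) <;>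
      simp only [hF, Prod.mk.injEq] at hval
    · have e1 : x1 = y1 := Subtype.ext hval.1
      have e2 : x2 = y2 := Subtype.ext hval.2
      subst e1; subst e2; rfl
    · exact absurd (hKM _ x1.2 (by rw [hval.1]; exact y1.2)) not_false
    · exact absurd (hKM _ x1.2 (by rw [hval.1]; exact hm₁M)) not_false
    · exact absurd (hKM _ x2.2 (by rw [hval.2]; exact hm₀M)) not_false
    · exact absurd (hKM _ (by rw [hval.1]; exact y1.2) x1.2) not_false
    · have e1 : x1 = y1 := Subtype.ext hval.1
      have e2 : x2 = y2 := Subtype.ext hval.2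
      subst e1; subst e2; rfl
    · exact absurd (hKM _ (by rw [hval.2]; exact hbK) x2.2) not_false
    · exact absurd (hKM _ (by rw [hval.1]; exact haK) x1.2) not_false
    · exact absurd (hKM _ (by rw [hval.1]; exact y1.2) hm₁M) not_false
    · exact absurd (hKM _ hbK (by rw [hval.2]; exact y2.2)) not_false
    · rfl
    · exact absurd (hKM _ hbK (by rw [hval.2]; exact hm₀M)) not_false
    · exact absurd (hKM _ (by rw [hval.2]; exact y2.2) hm₀M) not_false
    · exact absurd (hKM _ haK (by rw [hval.1]; exact y1.2)) not_false
    · exact absurd (hKM _ haK (by rw [hval.1]; exact hm₁M)) not_false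
    · rfl
  have hcount := Nat.card_le_card_of_injective F hFinj
  rw [Nat.card_sum, Nat.card_sum] at hcount
  have hbool : Nat.card Bool = 2 := by
    rw [Nat.card_eq_fintype_card]; rfl
  rw [hbool] at hcount
  unfold nullity
  rw [hcK, hcM, hcardα]
  push_cast
  omega
end Nullity

section Realizer
variable {α : Type*} [Lattice α]

theorem adjunct_realizer {a b : α} {K M : Set α}
    (hdisj : Disjoint K M) (hunion : K ∪ M = Set.univ)
    (haK : a ∈ K) (hbK : b ∈ K) (hab : a < b)
    (hcond : ∀ x ∈ K, ∀ y ∈ M, (x ≤ y ↔ x ≤ a) ∧ (y ≤ x ↔ b ≤ x))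
    {t : ℕ} (ht : 0 < t)
    {RK : Fin t → ↥K → ↥K → Prop} {RM : Fin t → ↥M → ↥M → Prop}
    (hRK : IsRealizer ((· ≤ ·) : ↥K → ↥K → Prop) RK)
    (hRM : IsRealizer ((· ≤ ·) : ↥M → ↥M → Prop) RM) :
    ∃ P : Fin (t + 1) → α → α → Prop, IsRealizer ((· ≤ ·) : α → α → Prop) P := by
  classical
  set i₀ : Fin t := ⟨0, ht⟩ with hi₀
  have hmem : ∀ x : α, x ∈ K ∨ x ∈ M := fun x => by
    have : x ∈ K ∪ M := by rw [hunion]; trivial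
    exact this
  have hba : ¬ b ≤ a := not_le_of_gt hab
  -- basic properties of the component realizers
  have hKrefl : ∀ i (u : ↥K), RK i u u := fun i u => by
    haveI := hRK.1 i; exact refl_of (RK i) u
  have hKtrans : ∀ i (u v w : ↥K), RK i u v → RK i v w → RK i u w := fun i u v w h1 h2 => by
    haveI := hRK.1 i; exact _root_.trans_of (RK i) h1 h2
  have hKanti : ∀ i (u v : ↥K), RK i u v → RK i v u → u = v := fun i u v h1 h2 => by
    haveI := hRK.1 i; exact antisymm_of (RK i) h1 h2
  have hKtotal : ∀ i (u v : ↥K), RK i u v ∨ RK i v u := fun i u v => by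
    haveI := hRK.1 i; exact total_of (RK i) u v
  have hMrefl : ∀ i (u : ↥M), RM i u u := fun i u => by
    haveI := hRM.1 i; exact refl_of (RM i) u
  have hMtrans : ∀ i (u v w : ↥M), RM i u v → RM i v w → RM i u w := fun i u v w h1 h2 => by
    haveI := hRM.1 i; exact _root_.trans_of (RM i) h1 h2
  have hManti : ∀ i (u v : ↥M), RM i u v → RM i v u → u = v := fun i u v h1 h2 => by
    haveI := hRM.1 i; exact antisymm_of (RM i) h1 h2
  have hMtotal : ∀ i (u v : ↥M), RM i u v ∨ RM i v u := fun i u v => by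
    haveI := hRM.1 i; exact total_of (RM i) u v
  have hKext : ∀ i (u v : ↥K), (u : α) ≤ v → RK i u v := fun i u v h =>
    (hRK.2 u v).1 (Subtype.coe_le_coe.1 h) i
  have hMext : ∀ i (u v : ↥M), (u : α) ≤ v → RM i u v := fun i u v h =>
    (hRM.2 u v).1 (Subtype.coe_le_coe.1 h) i
  have hKiff : ∀ u v : ↥K, (∀ i, RK i u v) → (u : α) ≤ v := fun u v h =>
    Subtype.coe_le_coe.2 ((hRK.2 u v).2 h)
  have hMiff : ∀ u v : ↥M, (∀ i, RM i u v) → (u : α) ≤ v := fun u v h =>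
    Subtype.coe_le_coe.2 ((hRM.2 u v).2 h)
  -- the "b-top" auxiliary linear order on K
  set E : ↥K → ↥K → Prop := fun u v =>
    (¬ b ≤ (u : α) ∧ b ≤ (v : α)) ∨ ((b ≤ (u : α) ↔ b ≤ (v : α)) ∧ RK i₀ u v) with hE
  have hErefl : ∀ u, E u u := fun u => Or.inr ⟨Iff.rfl, hKrefl i₀ u⟩
  have hEtrans : ∀ u v w, E u v → E v w → E u w := by
    intro u v w h1 h2
    rcases h1 with ⟨h1a, h1b⟩ | ⟨h1a, h1b⟩ <;> rcases h2 with ⟨h2a, h2b⟩ | ⟨h2a, h2b⟩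
    · exact absurd h1b h2a
    · exact Or.inl ⟨h1a, h2a.1 h1b⟩
    · exact Or.inl ⟨fun h => h2a (h1a.1 h), h2b⟩
    · exact Or.inr ⟨h1a.trans h2a, hKtrans i₀ u v w h1b h2b⟩
  have hEanti : ∀ u v, E u v → E v u → u = v := by
    intro u v h1 h2
    rcases h1 with ⟨h1a, h1b⟩ | ⟨h1a, h1b⟩ <;> rcases h2 with ⟨h2a, h2b⟩ | ⟨h2a, h2b⟩
    · exact absurd h1b h2a
    · exact absurd (h2a.1 h1b) h1a
    · exact absurd (h1a.1 h2b) h2a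
    · exact hKanti i₀ u v h1b h2b
  have hEtotal : ∀ u v, E u v ∨ E v u := by
    intro u v
    by_cases hu : b ≤ (u : α) <;> by_cases hv : b ≤ (v : α)
    · rcases hKtotal i₀ u v with h | h
      · exact Or.inl (Or.inr ⟨iff_of_true hu hv, h⟩)
      · exact Or.inr (Or.inr ⟨iff_of_true hv hu, h⟩)
    · exact Or.inr (Or.inl ⟨hv, hu⟩)
    · exact Or.inl (Or.inl ⟨hu, hv⟩)
    · rcases hKtotal i₀ u v with h | h
      · exact Or.inl (Or.inr ⟨iff_of_false hu hv, h⟩)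
      · exact Or.inr (Or.inr ⟨iff_of_false hv hu, h⟩)
  have hEext : ∀ u v : ↥K, (u : α) ≤ v → E u v := by
    intro u v h
    by_cases hu : b ≤ (u : α) <;> by_cases hv : b ≤ (v : α)
    · exact Or.inr ⟨iff_of_true hu hv, hKext i₀ u v h⟩
    · exact absurd (le_trans hu h) hv
    · exact Or.inl ⟨hu, hv⟩
    · exact Or.inr ⟨iff_of_false hu hv, hKext i₀ u v h⟩
  -- the family of linear orders
  set main : Fin t → α → α → Prop := fun i x y =>
    if hx : x ∈ K then
      (if hy : y ∈ K then RK i ⟨x, hx⟩ ⟨y, hy⟩ else RK i ⟨x, hx⟩ ⟨a, haK⟩)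
    else
      (if hy : y ∈ K then ¬ RK i ⟨y, hy⟩ ⟨a, haK⟩
       else RM i ⟨x, (hmem x).resolve_left hx⟩ ⟨y, (hmem y).resolve_left hy⟩) with hmain
  set lst : α → α → Prop := fun x y =>
    if hx : x ∈ K then
      (if _ : y ∈ K then E ⟨x, hx⟩ ⟨y, ‹y ∈ K›⟩ else ¬ b ≤ x)
    else
      (if hy : y ∈ K then b ≤ y
       else RM i₀ ⟨x, (hmem x).resolve_left hx⟩ ⟨y, (hmem y).resolve_left hy⟩) with hlst
  -- rewriting lemmas
  have mKK : ∀ i x y (hx : x ∈ K) (hy : y ∈ K), main i x y ↔ RK i ⟨x, hx⟩ ⟨y, hy⟩ := by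
    intro i x y hx hy; rw [hmain]; simp only [dif_pos hx, dif_pos hy]
  have mKM : ∀ i x y (hx : x ∈ K), y ∉ K → (main i x y ↔ RK i ⟨x, hx⟩ ⟨a, haK⟩) := by
    intro i x y hx hy; rw [hmain]; simp only [dif_pos hx, dif_neg hy]
  have mMK : ∀ i x y (hy : y ∈ K), x ∉ K → (main i x y ↔ ¬ RK i ⟨y, hy⟩ ⟨a, haK⟩) := by
    intro i x y hy hx; rw [hmain]; simp only [dif_neg hx, dif_pos hy]
  have mMM : ∀ i x y (hx : x ∉ K) (hy : y ∉ K),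
      main i x y ↔ RM i ⟨x, (hmem x).resolve_left hx⟩ ⟨y, (hmem y).resolve_left hy⟩ := by
    intro i x y hx hy; rw [hmain]; simp only [dif_neg hx, dif_neg hy]
  have lKK : ∀ x y (hx : x ∈ K) (hy : y ∈ K), lst x y ↔ E ⟨x, hx⟩ ⟨y, hy⟩ := by
    intro x y hx hy; rw [hlst]; simp only [dif_pos hx, dif_pos hy]
  have lKM : ∀ x y, x ∈ K → y ∉ K → (lst x y ↔ ¬ b ≤ x) := by
    intro x y hx hy; rw [hlst]; simp only [dif_pos hx, dif_neg hy]
  have lMK : ∀ x y, x ∉ K → y ∈ K → (lst x y ↔ b ≤ y) := by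
    intro x y hx hy; rw [hlst]; simp only [dif_neg hx, dif_pos hy]
  have lMM : ∀ x y (hx : x ∉ K) (hy : y ∉ K),
      lst x y ↔ RM i₀ ⟨x, (hmem x).resolve_left hx⟩ ⟨y, (hmem y).resolve_left hy⟩ := by
    intro x y hx hy; rw [hlst]; simp only [dif_neg hx, dif_neg hy]
  -- main i is a linear order
  have hmainlin : ∀ i, IsLinearOrder α (main i) := by
    intro i
    apply isLinearOrder_of
    · intro x
      by_cases hx : x ∈ K
      · exact (mKK i x x hx hx).2 (hKrefl i _)
      · exact (mMM i x x hx hx).2 (hMrefl i _)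
    · intro x y z hxy hyz
      by_cases hx : x ∈ K <;> by_cases hy : y ∈ K <;> by_cases hz : z ∈ K
      · exact (mKK i x z hx hz).2 (hKtrans i _ _ _ ((mKK i x y hx hy).1 hxy)
          ((mKK i y z hy hz).1 hyz))
      · exact (mKM i x z hx hz).2 (hKtrans i _ _ _ ((mKK i x y hx hy).1 hxy)
          ((mKM i y z hy hz).1 hyz))
      · refine (mKK i x z hx hz).2 ?_
        have h1 := (mKM i x y hx hy).1 hxy
        have h2 := (mMK i y z hz hy).1 hyz
        rcases hKtotal i ⟨x, hx⟩ ⟨z, hz⟩ with h | h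
        · exact h
        · exact absurd (hKtrans i _ _ _ h h1) h2
      · exact (mKM i x z hx hz).2 ((mKM i x y hx hy).1 hxy)
      · refine (mMK i x z hz hx).2 ?_
        have h1 := (mMK i x y hy hx).1 hxy
        have h2 := (mKK i y z hy hz).1 hyz
        intro hcon
        exact h1 (hKtrans i _ _ _ h2 hcon)
      · have h1 := (mMK i x y hy hx).1 hxy
        have h2 := (mKM i y z hy hz).1 hyz
        exact absurd h2 h1
      · exact (mMK i x z hz hx).2 ((mMK i y z hz hy).1 hyz)
      · exact (mMM i x z hx hz).2 (hMtrans i _ _ _ ((mMM i x y hx hy).1 hxy)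
          ((mMM i y z hy hz).1 hyz))
    · intro x y hxy hyx
      by_cases hx : x ∈ K <;> by_cases hy : y ∈ K
      · have := hKanti i _ _ ((mKK i x y hx hy).1 hxy) ((mKK i y x hy hx).1 hyx)
        exact congrArg Subtype.val this
      · exact absurd ((mKM i x y hx hy).1 hxy) ((mMK i y x hx hy).1 hyx)
      · exact absurd ((mKM i y x hy hx).1 hyx) ((mMK i x y hy hx).1 hxy)
      · have := hManti i _ _ ((mMM i x y hx hy).1 hxy) ((mMM i y x hy hx).1 hyx)
        exact congrArg Subtype.val this
    · intro x y
      by_cases hx : x ∈ K <;> by_cases hy : y ∈ K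
      · rcases hKtotal i ⟨x, hx⟩ ⟨y, hy⟩ with h | h
        · exact Or.inl ((mKK i x y hx hy).2 h)
        · exact Or.inr ((mKK i y x hy hx).2 h)
      · by_cases h : RK i ⟨x, hx⟩ ⟨a, haK⟩
        · exact Or.inl ((mKM i x y hx hy).2 h)
        · exact Or.inr ((mMK i y x hx hy).2 h)
      · by_cases h : RK i ⟨y, hy⟩ ⟨a, haK⟩
        · exact Or.inr ((mKM i y x hy hx).2 h)
        · exact Or.inl ((mMK i x y hy hx).2 h)
      · rcases hMtotal i ⟨x, (hmem x).resolve_left hx⟩ ⟨y, (hmem y).resolve_left hy⟩ with h | h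
        · exact Or.inl ((mMM i x y hx hy).2 h)
        · exact Or.inr ((mMM i y x hy hx).2 h)
  -- lst is a linear order
  have hlstlin : IsLinearOrder α lst := by
    apply isLinearOrder_of
    · intro x
      by_cases hx : x ∈ K
      · exact (lKK x x hx hx).2 (hErefl _)
      · exact (lMM x x hx hx).2 (hMrefl i₀ _)
    · intro x y z hxy hyz
      by_cases hx : x ∈ K <;> by_cases hy : y ∈ K <;> by_cases hz : z ∈ K
      · exact (lKK x z hx hz).2 (hEtrans _ _ _ ((lKK x y hx hy).1 hxy) ((lKK y z hy hz).1 hyz))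
      · refine (lKM x z hx hz).2 ?_
        have h1 := (lKK x y hx hy).1 hxy
        have h2 := (lKM y z hy hz).1 hyz
        intro hcon
        rcases h1 with ⟨h1a, _⟩ | ⟨h1a, _⟩
        · exact h1a hcon
        · exact h2 (h1a.1 hcon)
      · refine (lKK x z hx hz).2 ?_
        exact Or.inl ⟨(lKM x y hx hy).1 hxy, (lMK y z hy hz).1 hyz⟩
      · exact (lKM x z hx hz).2 ((lKM x y hx hy).1 hxy)
      · refine (lMK x z hx hz).2 ?_
        have h1 := (lMK x y hx hy).1 hxy
        have h2 := (lKK y z hy hz).1 hyz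
        rcases h2 with ⟨h2a, _⟩ | ⟨h2a, _⟩
        · exact absurd h1 h2a
        · exact h2a.1 h1
      · exact absurd ((lMK x y hx hy).1 hxy) (fun h => ((lKM y z hy hz).1 hyz) h)
      · exact (lMK x z hx hz).2 ((lMK y z hy hz).1 hyz)
      · exact (lMM x z hx hz).2 (hMtrans i₀ _ _ _ ((lMM x y hx hy).1 hxy)
          ((lMM y z hy hz).1 hyz))
    · intro x y hxy hyx
      by_cases hx : x ∈ K <;> by_cases hy : y ∈ K
      · have := hEanti _ _ ((lKK x y hx hy).1 hxy) ((lKK y x hy hx).1 hyx)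
        exact congrArg Subtype.val this
      · exact absurd ((lMK y x hy hx).1 hyx) ((lKM x y hx hy).1 hxy)
      · exact absurd ((lMK x y hx hy).1 hxy) ((lKM y x hy hx).1 hyx)
      · have := hManti i₀ _ _ ((lMM x y hx hy).1 hxy) ((lMM y x hy hx).1 hyx)
        exact congrArg Subtype.val this
    · intro x y
      by_cases hx : x ∈ K <;> by_cases hy : y ∈ K
      · rcases hEtotal ⟨x, hx⟩ ⟨y, hy⟩ with h | h
        · exact Or.inl ((lKK x y hx hy).2 h)
        · exact Or.inr ((lKK y x hy hx).2 h)
      · by_cases h : b ≤ x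
        · exact Or.inr ((lMK y x hy hx).2 h)
        · exact Or.inl ((lKM x y hx hy).2 h)
      · by_cases h : b ≤ y
        · exact Or.inl ((lMK x y hx hy).2 h)
        · exact Or.inr ((lKM y x hy hx).2 h)
      · rcases hMtotal i₀ ⟨x, (hmem x).resolve_left hx⟩ ⟨y, (hmem y).resolve_left hy⟩ with h | h
        · exact Or.inl ((lMM x y hx hy).2 h)
        · exact Or.inr ((lMM y x hy hx).2 h)
  -- assemble
  refine ⟨fun j => if hj : (j : ℕ) < t then main ⟨j, hj⟩ else lst, fun j => ?_, fun x y => ?_⟩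
  · by_cases hj : (j : ℕ) < t
    · simpa only [dif_pos hj] using hmainlin ⟨j, hj⟩
    · simpa only [dif_neg hj] using hlstlin
  · constructor
    · intro hxy j
      by_cases hj : (j : ℕ) < t
      · simp only [dif_pos hj]
        set i : Fin t := ⟨j, hj⟩
        by_cases hx : x ∈ K <;> by_cases hy : y ∈ K
        · exact (mKK i x y hx hy).2 (hKext i _ _ hxy)
        · have hyM : y ∈ M := (hmem y).resolve_left hy
          exact (mKM i x y hx hy).2 (hKext i ⟨x, hx⟩ ⟨a, haK⟩
            ((hcond x hx y hyM).1.1 hxy))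
        · have hxM : x ∈ M := (hmem x).resolve_left hx
          refine (mMK i x y hy hx).2 ?_
          intro hcon
          have h1 : b ≤ y := (hcond y hy x hxM).2.1 hxy
          have h2 : (a : α) ≤ y := le_trans hab.le h1
          have h3 : (⟨y, hy⟩ : ↥K) = ⟨a, haK⟩ := hKanti i _ _ hcon (hKext i _ _ h2)
          have h4 : y = a := congrArg Subtype.val h3
          exact hba (h4 ▸ h1)
        · exact (mMM i x y hx hy).2 (hMext i _ _ hxy)
      · simp only [dif_neg hj]
        by_cases hx : x ∈ K <;> by_cases hy : y ∈ K
        · exact (lKK x y hx hy).2 (hEext _ _ hxy)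
        · have hyM : y ∈ M := (hmem y).resolve_left hy
          refine (lKM x y hx hy).2 ?_
          intro hcon
          have h1 : x ≤ a := (hcond x hx y hyM).1.1 hxy
          exact hba (le_trans hcon h1)
        · have hxM : x ∈ M := (hmem x).resolve_left hx
          exact (lMK x y hx hy).2 ((hcond y hy x hxM).2.1 hxy)
        · exact (lMM x y hx hy).2 (hMext i₀ _ _ hxy)
    · intro hall
      have hmains : ∀ i : Fin t, main i x y := by
        intro i
        have := hall ⟨(i : ℕ), lt_of_lt_of_le i.2 (by omega)⟩
        simp only [dif_pos i.2] at this
        convert this using 2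
      have hlsts : lst x y := by
        have := hall ⟨t, by omega⟩
        simpa only [dif_neg (lt_irrefl t)] using this
      by_cases hx : x ∈ K <;> by_cases hy : y ∈ K
      · exact hKiff ⟨x, hx⟩ ⟨y, hy⟩ (fun i => (mKK i x y hx hy).1 (hmains i))
      · have hyM : y ∈ M := (hmem y).resolve_left hy
        have h1 : (x : α) ≤ a := hKiff ⟨x, hx⟩ ⟨a, haK⟩
          (fun i => (mKM i x y hx hy).1 (hmains i))
        exact (hcond x hx y hyM).1.2 h1
      · have hxM : x ∈ M := (hmem x).resolve_left hx
        have h1 : b ≤ y := (lMK x y hx hy).1 hlsts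
        exact (hcond y hy x hxM).2.2 h1
      · exact hMiff _ _ (fun i => (mMM i x y hx hy).1 (hmains i))
end Realizer

section Main

theorem main_aux : ∀ (n : ℕ) (α : Type u_1) [Lattice α] [Finite α], Nat.card α ≤ n →
    Dismantlable α →
    ∃ t : ℕ, 0 < t ∧ (t : ℤ) ≤ nullity α + 1 ∧
      ∃ R : Fin t → α → α → Prop, IsRealizer ((· ≤ ·) : α → α → Prop) R := by
  intro n
  induction n with
  | zero =>
    intro α _ _ hcard _
    haveI : IsEmpty α := by
      rcases Nat.card_eq_zero.1 (show Nat.card α = 0 by omega) with h | h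
      · exact h
      · exact absurd (inferInstance : Finite α) (by simpa using h)
    refine ⟨1, one_pos, ?_, _, isRealizer_single (fun x y => (IsEmpty.elim ‹_› x))⟩
    have := nullity_nonneg (β := α)
    omega
  | succ n ih =>
    intro α _ _ hcard hd
    by_cases hchain : ∀ x y : α, x ≤ y ∨ y ≤ x
    · refine ⟨1, one_pos, ?_, _, isRealizer_single hchain⟩
      have := nullity_nonneg (β := α)
      omega
    · push_neg at hchain
      obtain ⟨u, v, huv1, huv2⟩ := hchain
      obtain ⟨a, b, hpair⟩ := exists_adjunctPair_aux (n + 1) α hcard hd ⟨u, v, huv1, huv2⟩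
      obtain ⟨hab, K, M, hKne, hMne, hdisj, hunion, hKs, hMs, haK, hbK, hwit, hcond⟩ := hpair
      letI latK := hKs.lattice
      letI latM := hMs.lattice
      haveI : Nonempty ↥K := hKne.to_subtype
      haveI : Nonempty ↥M := hMne.to_subtype
      have hcardsum : Nat.card α = Nat.card ↥K + Nat.card ↥M := by
        rw [Nat.card_coe_set_eq, Nat.card_coe_set_eq,
          ← Set.ncard_union_eq hdisj (Set.toFinite _) (Set.toFinite _), hunion, Set.ncard_univ]
      have hKpos : 0 < Nat.card ↥K := Nat.card_pos
      have hMpos : 0 < Nat.card ↥M := Nat.card_pos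
      have hKlt : Nat.card ↥K ≤ n := by omega
      have hMlt : Nat.card ↥M ≤ n := by omega
      obtain ⟨tK, htK, htKb, RK, hRK⟩ := @ih ↥K latK _ hKlt (Dismantlable.restrict hKs hd)
      obtain ⟨tM, htM, htMb, RM, hRM⟩ := @ih ↥M latM _ hMlt (Dismantlable.restrict hMs hd)
      set s := max tK tM with hs
      obtain ⟨RK', hRK'⟩ := isRealizer_pad htK (le_max_left tK tM) hRK
      obtain ⟨RM', hRM'⟩ := isRealizer_pad htM (le_max_right tK tM) hRM
      have hspos : 0 < s := lt_of_lt_of_le htK (le_max_left tK tM)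
      obtain ⟨P, hP⟩ := adjunct_realizer hdisj hunion haK hbK hab hcond hspos hRK' hRM'
      refine ⟨s + 1, by omega, ?_, P, hP⟩
      -- arithmetic
      have hadj : nullity ↥K + nullity ↥M + 1 ≤ nullity α :=
        nullity_adjunct hKs hMs hKne hMne hdisj hunion haK hbK hab hwit hcond
      have hnnK : (0 : ℤ) ≤ nullity ↥K := nullity_nonneg
      have hnnM : (0 : ℤ) ≤ nullity ↥M := nullity_nonneg
      have hKK : (tK : ℤ) ≤ nullity ↥K + 1 := htKb
      have hMM : (tM : ℤ) ≤ nullity ↥M + 1 := htMb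
      rcases max_choice tK tM with h | h <;> rw [← hs] at h <;> rw [h] <;> push_cast <;> omega
end Main
/-- the order dimension of a finite dismantlable lattice of
nullity `k` is at most `k + 1`. -/
theorem dim_dismantlable_le_nullity_succ {α : Type*} [Lattice α] [Finite α]
    (hd : Dismantlable α) {k : ℕ} (hk : nullity α = (k : ℤ)) :
    orderDim ((· ≤ ·) : α → α → Prop) ≤ k + 1 := by
  obtain ⟨t, ht, htb, R, hR⟩ := main_aux (Nat.card α) α le_rfl hd
  have htk : t ≤ k + 1 := by rw [hk] at htb; omega
  obtain ⟨R2, hR2⟩ := isRealizer_pad ht htk hR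
  exact Nat.sInf_le ⟨by omega, R2, hR2⟩
end
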